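/- arXiv:1909.08647 — 5 statements merged into one kernel-verified Lean document; each statement's English description precedes it below -/
import Mathlib

section
/- Let k be an infinite field of characteristic zero and S := k[X₀,X₁,X₂]. Let P ∈ S be a nonzero homogeneous polynomial, Q₁, Q₂ ∈ S nonconstant homogeneous polynomials of degrees q₁, q₂, and v = (a₀,…,a_r) a tuple of homogeneous polynomials of a common degree. Set N := \binom{r+1}{2}. Then P divides q₂^N·Q₂^N·W_{∂_{P,Q₁}}(v) − q₁^N·Q₁^N·W_{∂_{P,Q₂}}(v). -/
open MvPolynomial

noncomputable section

/-- The Wronskian of a tuple `v` with respect to a derivation `D`. -/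
def wronskian {R A : Type*} [CommRing R] [CommRing A] [Algebra R A]
    (D : Derivation R A A) {n : ℕ} (v : Fin n → A) : A :=
  Matrix.det (Matrix.of fun i j : Fin n => (⇑D)^[(i : ℕ)] (v j))

/-- The derivation `det[(a₀,a₁,a₂);(b₀,b₁,b₂);∇]`. -/
def detDer {R : Type*} [CommRing R] (a b : Fin 3 → MvPolynomial (Fin 3) R) :
    Derivation R (MvPolynomial (Fin 3) R) (MvPolynomial (Fin 3) R) :=
  MvPolynomial.mkDerivation R
    ![a 1 * b 2 - a 2 * b 1, -(a 0 * b 2 - a 2 * b 0), a 0 * b 1 - a 1 * b 0]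

/-- The derivation `∂_{P,Q}`. -/
def delPQ {R : Type*} [CommRing R] (P Q : MvPolynomial (Fin 3) R) :
    Derivation R (MvPolynomial (Fin 3) R) (MvPolynomial (Fin 3) R) :=
  detDer (fun j => pderiv j P) (fun j => pderiv j Q)

namespace DvdWronskianAux

variable {k : Type*} [Field k]

/-! ### Generalities about derivations on `k[X₀,X₁,X₂]` -/

lemma derivation_apply (D : Derivation k (MvPolynomial (Fin 3) k) (MvPolynomial (Fin 3) k))
    (f : MvPolynomial (Fin 3) k) :
    D f = ∑ t : Fin 3, pderiv t f * D (X t) := by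
  induction f using MvPolynomial.induction_on with
  | C a => simp
  | add f g hf hg => simp [hf, hg, add_mul, Finset.sum_add_distrib]
  | mul_X f j hf =>
    rw [Derivation.leibniz]
    simp only [smul_eq_mul, pderiv_mul, hf]
    fin_cases j <;>
      simp [Fin.sum_univ_three, pderiv_X_self, pderiv_X_of_ne] <;> ring

/-! ### Euler's identity -/

lemma euler_monomial (d : Fin 3 →₀ ℕ) (a : k) :
    ∑ t : Fin 3, X t * pderiv t (monomial d a)
      = (d.degree : MvPolynomial (Fin 3) k) * monomial d a := by
  have hdeg : (d.degree : ℕ) = ∑ t : Fin 3, d t := by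
    rw [Finsupp.degree]
    exact Finset.sum_subset (Finset.subset_univ _) (fun x _ hx => by
      simpa using Finsupp.notMem_support_iff.mp hx)
  rw [hdeg]
  push_cast
  rw [Finset.sum_mul]
  refine Finset.sum_congr rfl fun t _ => ?_
  rw [pderiv_monomial]
  by_cases h : d t = 0
  · simp [h]
  · have h1 : Finsupp.single t 1 + (d - Finsupp.single t 1) = d := by
      ext j
      rcases eq_or_ne j t with rfl | hj
      · simp; omega
      · simp [Finsupp.single_apply_eq_zero.mpr, hj.symm, Finsupp.single_eq_of_ne (Ne.symm hj)]
    calc X t * monomial (d - Finsupp.single t 1) (a * d t)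
        = monomial (Finsupp.single t 1 + (d - Finsupp.single t 1)) (1 * (a * d t)) := by
          rw [X, monomial_mul]
      _ = (d t : MvPolynomial (Fin 3) k) * monomial d a := by
          rw [h1, one_mul, ← C_eq_coe_nat, C_mul_monomial, mul_comm]

lemma euler {f : MvPolynomial (Fin 3) k} {m : ℕ} (hf : f.IsHomogeneous m) :
    ∑ t : Fin 3, X t * pderiv t f = (m : MvPolynomial (Fin 3) k) * f := by
  conv_lhs => rw [f.as_sum]
  simp only [map_sum, Finset.mul_sum]
  rw [Finset.sum_comm]
  conv_rhs => rw [f.as_sum, Finset.mul_sum]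
  refine Finset.sum_congr rfl fun d hd => ?_
  rw [euler_monomial]
  congr 2
  have := hf (Finsupp.mem_support_iff.mp hd)
  rw [← this, Finsupp.degree_eq_weight_one]; rfl

/-! ### Homogeneity of partial derivatives -/

lemma degree_fin3 (d : Fin 3 →₀ ℕ) : d.degree = ∑ t : Fin 3, d t := by
  rw [Finsupp.degree]
  exact Finset.sum_subset (Finset.subset_univ _) (fun x _ hx => by
    simpa using Finsupp.notMem_support_iff.mp hx)

lemma pderiv_isHomogeneous {f : MvPolynomial (Fin 3) k} {n : ℕ} (t : Fin 3)
    (hf : f.IsHomogeneous (n + 1)) : (pderiv t f).IsHomogeneous n := by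
  conv => rw [f.as_sum]
  rw [map_sum]
  refine MvPolynomial.IsHomogeneous.sum _ _ _ fun d hd => ?_
  rw [pderiv_monomial]
  by_cases h : d t = 0
  · simp [h, isHomogeneous_zero]
  · refine isHomogeneous_monomial _ ?_
    have hdeg := hf (Finsupp.mem_support_iff.mp hd)
    rw [show (Finsupp.weight (1 : Fin 3 → ℕ)) d = Finsupp.weight (fun _ : Fin 3 => (1 : ℕ)) d from rfl] at hdeg
    rw [← Finsupp.degree_eq_weight_one] at hdeg
    rw [degree_fin3] at hdeg ⊢
    simp only [Finsupp.coe_tsub, Pi.sub_apply]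
    rw [Fin.sum_univ_three] at hdeg ⊢
    fin_cases t <;> simp [Finsupp.single_apply, Fin.ext_iff] at h hdeg ⊢ <;> omega

lemma pderiv_of_isHomogeneous_zero {f : MvPolynomial (Fin 3) k} (t : Fin 3)
    (hf : f.IsHomogeneous 0) : pderiv t f = 0 := by
  conv => rw [f.as_sum]
  rw [map_sum]
  refine Finset.sum_eq_zero fun d hd => ?_
  have hdeg := hf (Finsupp.mem_support_iff.mp hd)
  rw [show (Finsupp.weight (1 : Fin 3 → ℕ)) d = Finsupp.weight (fun _ : Fin 3 => (1 : ℕ)) d from rfl] at hdeg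
  rw [← Finsupp.degree_eq_weight_one, Finsupp.degree_eq_zero_iff] at hdeg
  subst hdeg
  simp [pderiv_monomial]

/-! ### `X i` is prime -/

def killX (i : Fin 3) : MvPolynomial (Fin 3) k →ₐ[k] MvPolynomial (Fin 3) k :=
  aeval (Function.update X i 0)

lemma killX_X_self (i : Fin 3) : killX i (X i : MvPolynomial (Fin 3) k) = 0 := by
  simp [killX]

lemma killX_X_ne (i j : Fin 3) (h : j ≠ i) : killX i (X j : MvPolynomial (Fin 3) k) = X j := by
  simp [killX, Function.update_of_ne h]

lemma dvd_sub_killX (i : Fin 3) (f : MvPolynomial (Fin 3) k) :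
    X i ∣ f - killX i f := by
  induction f using MvPolynomial.induction_on with
  | C a => simp [killX]
  | add f g hf hg =>
    have : f + g - killX i (f + g) = (f - killX i f) + (g - killX i g) := by
      rw [map_add]; ring
    rw [this]; exact dvd_add hf hg
  | mul_X f j hf =>
    rcases eq_or_ne j i with rfl | hj
    · rw [map_mul, killX_X_self, mul_zero, sub_zero]
      exact Dvd.dvd.mul_left (dvd_refl _) f
    · rw [map_mul, killX_X_ne i j hj]
      have : f * X j - killX i f * X j = (f - killX i f) * X j := by ring
      rw [this]
      exact (hf).mul_right _

lemma X_dvd_iff_killX {i : Fin 3} {f : MvPolynomial (Fin 3) k} :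
    X i ∣ f ↔ killX i f = 0 := by
  constructor
  · rintro ⟨g, rfl⟩
    rw [map_mul, killX_X_self, zero_mul]
  · intro h
    have := dvd_sub_killX i f
    rwa [h, sub_zero] at this

lemma prime_X_mv (i : Fin 3) : Prime (X i : MvPolynomial (Fin 3) k) := by
  refine ⟨X_ne_zero i, ?_, ?_⟩
  · intro h
    have := h.map (constantCoeff (R := k) (σ := Fin 3))
    rw [constantCoeff_X] at this
    exact not_isUnit_zero this
  · intro a b hab
    rw [X_dvd_iff_killX, map_mul, mul_eq_zero] at hab
    rcases hab with h | h
    · exact Or.inl (X_dvd_iff_killX.mpr h)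
    · exact Or.inr (X_dvd_iff_killX.mpr h)

lemma X_not_dvd_X {i j : Fin 3} (h : i ≠ j) : ¬ (X i : MvPolynomial (Fin 3) k) ∣ X j := by
  rw [X_dvd_iff_killX, killX_X_ne i j (Ne.symm h)]
  exact X_ne_zero j

/-! ### From divisibility of `Xᵢ^N * T` to divisibility of `T` -/

lemma dvd_of_dvd_mul_X_pow (N : ℕ) (P : MvPolynomial (Fin 3) k) (T : MvPolynomial (Fin 3) k)
    (h0 : P ∣ X 0 ^ N * T) (h1 : P ∣ X 1 ^ N * T) : P ∣ T := by
  induction P using UniqueFactorizationMonoid.induction_on_prime generalizing T with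
  | h₁ =>
    rw [zero_dvd_iff, mul_eq_zero] at h0
    rcases h0 with h | h
    · exact absurd h (pow_ne_zero _ (X_ne_zero 0))
    · rw [h]
  | h₂ x hx => exact hx.dvd
  | h₃ a p ha hp ih =>
    have hpd : p ∣ X 0 ^ N * T := (Dvd.intro _ rfl).trans h0
    rcases (hp.2.2 _ _ hpd) with hX | hT
    · have hpX0 : p ∣ X 0 := hp.dvd_of_dvd_pow hX
      have hpd1 : p ∣ X 1 ^ N * T := (Dvd.intro _ rfl).trans h1
      rcases hp.2.2 _ _ hpd1 with hX1 | hT1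
      · have hpX1 : p ∣ X 1 := hp.dvd_of_dvd_pow hX1
        have ha01 : (X 0 : MvPolynomial (Fin 3) k) ∣ X 1 :=
          ((hp.associated_of_dvd (prime_X_mv 0) hpX0).symm.dvd).trans hpX1
        exact absurd ha01 (X_not_dvd_X (by decide))
      · obtain ⟨T', rfl⟩ := hT1
        have h0' : a ∣ X 0 ^ N * T' := by
          have : X 0 ^ N * (p * T') = p * (X 0 ^ N * T') := by ring
          rw [this] at h0
          exact (mul_dvd_mul_iff_left hp.ne_zero).mp h0
        have h1' : a ∣ X 1 ^ N * T' := by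
          have : X 1 ^ N * (p * T') = p * (X 1 ^ N * T') := by ring
          rw [this] at h1
          exact (mul_dvd_mul_iff_left hp.ne_zero).mp h1
        exact mul_dvd_mul_left p (ih T' h0' h1')
    · obtain ⟨T', rfl⟩ := hT
      have h0' : a ∣ X 0 ^ N * T' := by
        have : X 0 ^ N * (p * T') = p * (X 0 ^ N * T') := by ring
        rw [this] at h0
        exact (mul_dvd_mul_iff_left hp.ne_zero).mp h0
      have h1' : a ∣ X 1 ^ N * T' := by
        have : X 1 ^ N * (p * T') = p * (X 1 ^ N * T') := by ring
        rw [this] at h1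
        exact (mul_dvd_mul_iff_left hp.ne_zero).mp h1
      exact mul_dvd_mul_left p (ih T' h0' h1')

/-! ### Congruence of Wronskians modulo `P` -/

lemma deriv_sub_dvd (P : MvPolynomial (Fin 3) k)
    (D D' : Derivation k (MvPolynomial (Fin 3) k) (MvPolynomial (Fin 3) k))
    (hgen : ∀ t, P ∣ D (X t) - D' (X t)) (f : MvPolynomial (Fin 3) k) :
    P ∣ D f - D' f := by
  induction f using MvPolynomial.induction_on with
  | C a =>
    rw [show (C a : MvPolynomial (Fin 3) k) = algebraMap k _ a from rfl,
      Derivation.map_algebraMap, Derivation.map_algebraMap, sub_zero]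
    exact dvd_zero P
  | add f g hf hg =>
    have : D (f + g) - D' (f + g) = (D f - D' f) + (D g - D' g) := by
      rw [map_add, map_add]; ring
    rw [this]; exact dvd_add hf hg
  | mul_X f j hf =>
    have h : D (f * X j) - D' (f * X j)
        = f * (D (X j) - D' (X j)) + X j * (D f - D' f) := by
      simp only [Derivation.leibniz, smul_eq_mul]; ring
    rw [h]
    exact dvd_add ((hgen j).mul_left f) (hf.mul_left _)

lemma dvd_deriv_of_dvd (P : MvPolynomial (Fin 3) k)
    (D : Derivation k (MvPolynomial (Fin 3) k) (MvPolynomial (Fin 3) k))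
    (hP : P ∣ D P) {x : MvPolynomial (Fin 3) k} (hx : P ∣ x) : P ∣ D x := by
  obtain ⟨y, rfl⟩ := hx
  rw [Derivation.leibniz]
  simp only [smul_eq_mul]
  exact dvd_add (dvd_mul_right P (D y)) (hP.mul_left y)

lemma iterate_sub_dvd (P : MvPolynomial (Fin 3) k)
    (D D' : Derivation k (MvPolynomial (Fin 3) k) (MvPolynomial (Fin 3) k))
    (hP : P ∣ D P) (hgen : ∀ t, P ∣ D (X t) - D' (X t)) (l : ℕ) (f : MvPolynomial (Fin 3) k) :
    P ∣ (⇑D)^[l] f - (⇑D')^[l] f := by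
  induction l generalizing f with
  | zero => simp
  | succ l ih =>
    rw [Function.iterate_succ_apply', Function.iterate_succ_apply']
    have : D ((⇑D)^[l] f) - D' ((⇑D')^[l] f)
        = D ((⇑D)^[l] f - (⇑D')^[l] f) + (D ((⇑D')^[l] f) - D' ((⇑D')^[l] f)) := by
      rw [map_sub]; ring
    rw [this]
    exact dvd_add (dvd_deriv_of_dvd P D hP (ih f)) (deriv_sub_dvd P D D' hgen _)

lemma wronskian_sub_dvd (P : MvPolynomial (Fin 3) k)
    (D D' : Derivation k (MvPolynomial (Fin 3) k) (MvPolynomial (Fin 3) k))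
    (hP : P ∣ D P) (hgen : ∀ t, P ∣ D (X t) - D' (X t)) {n : ℕ}
    (v : Fin n → MvPolynomial (Fin 3) k) :
    P ∣ wronskian D v - wronskian D' v := by
  rw [← Ideal.mem_span_singleton, ← Ideal.Quotient.eq_zero_iff_mem, map_sub, sub_eq_zero]
  let φ := Ideal.Quotient.mk (Ideal.span {P})
  show φ (wronskian D v) = φ (wronskian D' v)
  rw [wronskian, wronskian, RingHom.map_det, RingHom.map_det]
  congr 1
  ext i j
  simp only [RingHom.mapMatrix_apply, Matrix.map_apply, Matrix.of_apply]
  exact Ideal.Quotient.eq.mpr (Ideal.mem_span_singleton.mpr (iterate_sub_dvd P D D' hP hgen i (v j)))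

/-! ### Scaling behaviour of the Wronskian -/

section Scaling

variable {R A : Type*} [CommRing R] [CommRing A] [Algebra R A]

def wrCoeff (D E : Derivation R A A) (h g : A) (μ : ℕ → R) : ℕ → ℕ → A
  | 0, l => if l = 0 then 1 else 0
  | i+1, l => h * D (wrCoeff D E h g μ i l) + g * E (wrCoeff D E h g μ i l)
      + μ l • (g * wrCoeff D E h g μ i l)
      + (if l = 0 then 0 else h * wrCoeff D E h g μ i (l-1))

lemma wrCoeff_zero (D E : Derivation R A A) (h g : A) (μ : ℕ → R) (l : ℕ) :
    wrCoeff D E h g μ 0 l = if l = 0 then 1 else 0 := rfl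

lemma wrCoeff_succ (D E : Derivation R A A) (h g : A) (μ : ℕ → R) (i l : ℕ) :
    wrCoeff D E h g μ (i+1) l = h * D (wrCoeff D E h g μ i l) + g * E (wrCoeff D E h g μ i l)
      + μ l • (g * wrCoeff D E h g μ i l)
      + (if l = 0 then 0 else h * wrCoeff D E h g μ i (l-1)) := rfl

lemma wrCoeff_eq_zero (D E : Derivation R A A) (h g : A) (μ : ℕ → R) :
    ∀ i l, i < l → wrCoeff D E h g μ i l = 0 := by
  intro i
  induction i with
  | zero => intro l hl; rw [wrCoeff_zero, if_neg (by omega)]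
  | succ i ih =>
    intro l hl
    rw [wrCoeff_succ, ih l (by omega), if_neg (by omega), ih (l-1) (by omega)]
    simp

lemma wrCoeff_diag (D E : Derivation R A A) (h g : A) (μ : ℕ → R) :
    ∀ i, wrCoeff D E h g μ i i = h ^ i := by
  intro i
  induction i with
  | zero => simp [wrCoeff_zero]
  | succ i ih =>
    rw [wrCoeff_succ, wrCoeff_eq_zero D E h g μ i (i+1) (by omega), if_neg (by omega)]
    simp [ih, pow_succ, mul_comm]

lemma iterate_smul_add_apply (D E : Derivation R A A) (h g : A) (μ : ℕ → R)
    {n : ℕ} (v : Fin n → A)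
    (hE : ∀ l (j : Fin n), E ((⇑D)^[l] (v j)) = μ l • (⇑D)^[l] (v j)) (j : Fin n) :
    ∀ i, (⇑(h • D + g • E))^[i] (v j)
      = ∑ l ∈ Finset.range (i+1), wrCoeff D E h g μ i l * (⇑D)^[l] (v j) := by
  set B : Derivation R A A := h • D + g • E with hBdef
  have hB : ∀ x, B x = h * D x + g * E x := by
    intro x; simp [hBdef, smul_eq_mul]
  intro i
  induction i with
  | zero => simp [wrCoeff_zero]
  | succ i ih =>
    rw [Function.iterate_succ_apply', ih, ← Derivation.coeFn_coe, map_sum]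
    have step : ∀ l ∈ Finset.range (i+1),
        (B : A →ₗ[R] A) (wrCoeff D E h g μ i l * (⇑D)^[l] (v j))
        = (h * D (wrCoeff D E h g μ i l) + g * E (wrCoeff D E h g μ i l)
            + μ l • (g * wrCoeff D E h g μ i l)) * (⇑D)^[l] (v j)
          + (h * wrCoeff D E h g μ i l) * (⇑D)^[l+1] (v j) := by
      intro l _
      have : (B : A →ₗ[R] A) (wrCoeff D E h g μ i l * (⇑D)^[l] (v j))
          = B (wrCoeff D E h g μ i l * (⇑D)^[l] (v j)) := rfl
      rw [this, Derivation.leibniz, hB, hB, hE l j, Function.iterate_succ_apply']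
      simp only [smul_eq_mul, Algebra.smul_def]
      ring
    rw [Finset.sum_congr rfl step, Finset.sum_add_distrib]
    have hF : ∑ l ∈ Finset.range (i+1),
        (h * D (wrCoeff D E h g μ i l) + g * E (wrCoeff D E h g μ i l)
          + μ l • (g * wrCoeff D E h g μ i l)) * (⇑D)^[l] (v j)
        = ∑ l ∈ Finset.range (i+2),
        (h * D (wrCoeff D E h g μ i l) + g * E (wrCoeff D E h g μ i l)
          + μ l • (g * wrCoeff D E h g μ i l)) * (⇑D)^[l] (v j) := by
      rw [Finset.sum_range_succ (n := i+1)]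
      rw [wrCoeff_eq_zero D E h g μ i (i+1) (by omega)]
      simp
    have hG : ∑ l ∈ Finset.range (i+1), (h * wrCoeff D E h g μ i l) * (⇑D)^[l+1] (v j)
        = ∑ l ∈ Finset.range (i+2),
            (if l = 0 then 0 else h * wrCoeff D E h g μ i (l-1)) * (⇑D)^[l] (v j) := by
      rw [Finset.sum_range_succ' (fun l => (if l = 0 then 0 else h * wrCoeff D E h g μ i (l-1))
        * (⇑D)^[l] (v j)) (i+1)]
      simp
    rw [hF, hG, ← Finset.sum_add_distrib]
    refine Finset.sum_congr rfl fun l _ => ?_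
    rw [wrCoeff_succ]
    simp only [Algebra.smul_def]
    ring

lemma wronskian_smul_add (D E : Derivation R A A) (h g : A) (μ : ℕ → R)
    {n : ℕ} (v : Fin n → A)
    (hE : ∀ l (j : Fin n), E ((⇑D)^[l] (v j)) = μ l • (⇑D)^[l] (v j)) :
    wronskian (h • D + g • E) v = h ^ (n.choose 2) * wronskian D v := by
  classical
  set L : Matrix (Fin n) (Fin n) A := Matrix.of fun i l : Fin n => wrCoeff D E h g μ i l with hL
  set M : Matrix (Fin n) (Fin n) A := Matrix.of fun l j : Fin n => (⇑D)^[(l : ℕ)] (v j) with hM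
  have key : (Matrix.of fun i j : Fin n => (⇑(h • D + g • E))^[(i : ℕ)] (v j)) = L * M := by
    ext i j
    rw [Matrix.mul_apply]
    simp only [hL, hM, Matrix.of_apply]
    rw [iterate_smul_add_apply D E h g μ v hE j i]
    rw [Fin.sum_univ_eq_sum_range (fun l => wrCoeff D E h g μ i l * (⇑D)^[l] (v j)) n]
    apply Finset.sum_subset
    · intro x hx
      simp only [Finset.mem_range] at hx ⊢
      have hi := i.isLt
      omega
    · intro x _ hx
      simp only [Finset.mem_range, not_lt] at hx
      rw [wrCoeff_eq_zero D E h g μ i x (by omega)]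
      simp
  have hLdet : L.det = h ^ (n.choose 2) := by
    have htri : L.BlockTriangular OrderDual.toDual := by
      intro i j hij
      exact wrCoeff_eq_zero D E h g μ i j (by exact hij)
    rw [Matrix.det_of_lowerTriangular L htri]
    have : ∀ i : Fin n, L i i = h ^ (i : ℕ) := fun i => wrCoeff_diag D E h g μ i
    rw [Finset.prod_congr rfl (fun i _ => this i), Finset.prod_pow_eq_pow_sum]
    congr 1
    rw [Fin.sum_univ_eq_sum_range (fun i => i) n]
    have h2 := Finset.sum_range_id_mul_two n
    have h3 := Nat.choose_two_right n
    omega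
  rw [wronskian, key, Matrix.det_mul, hLdet, wronskian]

end Scaling

/-! ### Values of `delPQ` on the variables, and the key identity -/

lemma fin3_mk2 (h : 2 < 3) : (⟨2, h⟩ : Fin 3) = (2 : Fin 3) := rfl

lemma delPQ_X0 (P Q : MvPolynomial (Fin 3) k) :
    delPQ P Q (X 0) = pderiv 1 P * pderiv 2 Q - pderiv 2 P * pderiv 1 Q := by
  simp [delPQ, detDer, mkDerivation_X]

lemma delPQ_X1 (P Q : MvPolynomial (Fin 3) k) :
    delPQ P Q (X 1) = -(pderiv 0 P * pderiv 2 Q - pderiv 2 P * pderiv 0 Q) := by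
  simp [delPQ, detDer, mkDerivation_X]

lemma delPQ_X2 (P Q : MvPolynomial (Fin 3) k) :
    delPQ P Q (X 2) = pderiv 0 P * pderiv 1 Q - pderiv 1 P * pderiv 0 Q := by
  simp [delPQ, detDer, mkDerivation_X]

lemma delPQ_self (P Q : MvPolynomial (Fin 3) k) : delPQ P Q P = 0 := by
  rw [derivation_apply, Fin.sum_univ_three, delPQ_X0, delPQ_X1, delPQ_X2]
  ring

/-- The Jacobian determinant of `P, Q1, Q2`. -/
def jacS (P Q1 Q2 : MvPolynomial (Fin 3) k) : MvPolynomial (Fin 3) k :=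
  pderiv 0 P * (pderiv 1 Q1 * pderiv 2 Q2 - pderiv 2 Q1 * pderiv 1 Q2)
    - pderiv 1 P * (pderiv 0 Q1 * pderiv 2 Q2 - pderiv 2 Q1 * pderiv 0 Q2)
    + pderiv 2 P * (pderiv 0 Q1 * pderiv 1 Q2 - pderiv 1 Q1 * pderiv 0 Q2)

lemma key_identity (Pp Q1 Q2 pc c1 c2 : MvPolynomial (Fin 3) k)
    (hEP : X 0 * pderiv 0 Pp + X 1 * pderiv 1 Pp + X 2 * pderiv 2 Pp = pc * Pp)
    (hE1 : X 0 * pderiv 0 Q1 + X 1 * pderiv 1 Q1 + X 2 * pderiv 2 Q1 = c1 * Q1)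
    (hE2 : X 0 * pderiv 0 Q2 + X 1 * pderiv 1 Q2 + X 2 * pderiv 2 Q2 = c2 * Q2)
    (i t : Fin 3) :
    Pp ∣ X i * (c2 * Q2) * delPQ Pp Q1 (X t) - X i * (c1 * Q1) * delPQ Pp Q2 (X t)
      - (X i * jacS Pp Q1 Q2) * X t := by
  fin_cases i <;> fin_cases t <;> beta_reduce <;>
    simp only [Fin.zero_eta, Fin.mk_one, fin3_mk2, Fin.isValue]
  · rw [delPQ_X0 Pp Q1, delPQ_X0 Pp Q2]
    refine ⟨pc * (((c2 * Q2 * pderiv 1 Q1 - c1 * Q1 * pderiv 1 Q2) * 0 - (c2 * Q2 * pderiv 2 Q1 - c1 * Q1 * pderiv 2 Q2) * 0) - X 0 * (pderiv 1 Q1 * pderiv 2 Q2 - pderiv 2 Q1 * pderiv 1 Q2)), ?_⟩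
    unfold jacS
    linear_combination ((((c2 * Q2 * pderiv 1 Q1 - c1 * Q1 * pderiv 1 Q2) * 0 - (c2 * Q2 * pderiv 2 Q1 - c1 * Q1 * pderiv 2 Q2) * 0) - X 0 * (pderiv 1 Q1 * pderiv 2 Q2 - pderiv 2 Q1 * pderiv 1 Q2))) * hEP + ((c2 * Q2 * (0 * pderiv 2 Pp - 0 * pderiv 1 Pp) - X 0 * (pderiv 1 Q2 * pderiv 2 Pp - pderiv 2 Q2 * pderiv 1 Pp))) * hE1 + ((-(c1 * Q1) * (0 * pderiv 2 Pp - 0 * pderiv 1 Pp) - X 0 * (pderiv 1 Pp * pderiv 2 Q1 - pderiv 2 Pp * pderiv 1 Q1))) * hE2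
  · rw [delPQ_X1 Pp Q1, delPQ_X1 Pp Q2]
    refine ⟨pc * (((c2 * Q2 * pderiv 1 Q1 - c1 * Q1 * pderiv 1 Q2) * 0 - (c2 * Q2 * pderiv 2 Q1 - c1 * Q1 * pderiv 2 Q2) * 1) - X 1 * (pderiv 1 Q1 * pderiv 2 Q2 - pderiv 2 Q1 * pderiv 1 Q2)), ?_⟩
    unfold jacS
    linear_combination ((((c2 * Q2 * pderiv 1 Q1 - c1 * Q1 * pderiv 1 Q2) * 0 - (c2 * Q2 * pderiv 2 Q1 - c1 * Q1 * pderiv 2 Q2) * 1) - X 1 * (pderiv 1 Q1 * pderiv 2 Q2 - pderiv 2 Q1 * pderiv 1 Q2))) * hEP + ((c2 * Q2 * (1 * pderiv 2 Pp - 0 * pderiv 1 Pp) - X 1 * (pderiv 1 Q2 * pderiv 2 Pp - pderiv 2 Q2 * pderiv 1 Pp))) * hE1 + ((-(c1 * Q1) * (1 * pderiv 2 Pp - 0 * pderiv 1 Pp) - X 1 * (pderiv 1 Pp * pderiv 2 Q1 - pderiv 2 Pp * pderiv 1 Q1))) * hE2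
  · rw [delPQ_X2 Pp Q1, delPQ_X2 Pp Q2]
    refine ⟨pc * (((c2 * Q2 * pderiv 1 Q1 - c1 * Q1 * pderiv 1 Q2) * 1 - (c2 * Q2 * pderiv 2 Q1 - c1 * Q1 * pderiv 2 Q2) * 0) - X 2 * (pderiv 1 Q1 * pderiv 2 Q2 - pderiv 2 Q1 * pderiv 1 Q2)), ?_⟩
    unfold jacS
    linear_combination ((((c2 * Q2 * pderiv 1 Q1 - c1 * Q1 * pderiv 1 Q2) * 1 - (c2 * Q2 * pderiv 2 Q1 - c1 * Q1 * pderiv 2 Q2) * 0) - X 2 * (pderiv 1 Q1 * pderiv 2 Q2 - pderiv 2 Q1 * pderiv 1 Q2))) * hEP + ((c2 * Q2 * (0 * pderiv 2 Pp - 1 * pderiv 1 Pp) - X 2 * (pderiv 1 Q2 * pderiv 2 Pp - pderiv 2 Q2 * pderiv 1 Pp))) * hE1 + ((-(c1 * Q1) * (0 * pderiv 2 Pp - 1 * pderiv 1 Pp) - X 2 * (pderiv 1 Pp * pderiv 2 Q1 - pderiv 2 Pp * pderiv 1 Q1))) * hE2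
  · rw [delPQ_X0 Pp Q1, delPQ_X0 Pp Q2]
    refine ⟨pc * ((-((c2 * Q2 * pderiv 0 Q1 - c1 * Q1 * pderiv 0 Q2) * 0 - (c2 * Q2 * pderiv 2 Q1 - c1 * Q1 * pderiv 2 Q2) * 1)) - X 0 * (-(pderiv 0 Q1 * pderiv 2 Q2 - pderiv 2 Q1 * pderiv 0 Q2))), ?_⟩
    unfold jacS
    linear_combination (((-((c2 * Q2 * pderiv 0 Q1 - c1 * Q1 * pderiv 0 Q2) * 0 - (c2 * Q2 * pderiv 2 Q1 - c1 * Q1 * pderiv 2 Q2) * 1)) - X 0 * (-(pderiv 0 Q1 * pderiv 2 Q2 - pderiv 2 Q1 * pderiv 0 Q2)))) * hEP + ((c2 * Q2 * (-(1 * pderiv 2 Pp - 0 * pderiv 0 Pp)) - X 0 * (-(pderiv 0 Q2 * pderiv 2 Pp - pderiv 2 Q2 * pderiv 0 Pp)))) * hE1 + ((-(c1 * Q1) * (-(1 * pderiv 2 Pp - 0 * pderiv 0 Pp)) - X 0 * (-(pderiv 0 Pp * pderiv 2 Q1 - pderiv 2 Pp * pderiv 0 Q1)))) * hE2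
  · rw [delPQ_X1 Pp Q1, delPQ_X1 Pp Q2]
    refine ⟨pc * ((-((c2 * Q2 * pderiv 0 Q1 - c1 * Q1 * pderiv 0 Q2) * 0 - (c2 * Q2 * pderiv 2 Q1 - c1 * Q1 * pderiv 2 Q2) * 0)) - X 1 * (-(pderiv 0 Q1 * pderiv 2 Q2 - pderiv 2 Q1 * pderiv 0 Q2))), ?_⟩
    unfold jacS
    linear_combination (((-((c2 * Q2 * pderiv 0 Q1 - c1 * Q1 * pderiv 0 Q2) * 0 - (c2 * Q2 * pderiv 2 Q1 - c1 * Q1 * pderiv 2 Q2) * 0)) - X 1 * (-(pderiv 0 Q1 * pderiv 2 Q2 - pderiv 2 Q1 * pderiv 0 Q2)))) * hEP + ((c2 * Q2 * (-(0 * pderiv 2 Pp - 0 * pderiv 0 Pp)) - X 1 * (-(pderiv 0 Q2 * pderiv 2 Pp - pderiv 2 Q2 * pderiv 0 Pp)))) * hE1 + ((-(c1 * Q1) * (-(0 * pderiv 2 Pp - 0 * pderiv 0 Pp)) - X 1 * (-(pderiv 0 Pp * pderiv 2 Q1 - pderiv 2 Pp * pderiv 0 Q1)))) * hE2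
  · rw [delPQ_X2 Pp Q1, delPQ_X2 Pp Q2]
    refine ⟨pc * ((-((c2 * Q2 * pderiv 0 Q1 - c1 * Q1 * pderiv 0 Q2) * 1 - (c2 * Q2 * pderiv 2 Q1 - c1 * Q1 * pderiv 2 Q2) * 0)) - X 2 * (-(pderiv 0 Q1 * pderiv 2 Q2 - pderiv 2 Q1 * pderiv 0 Q2))), ?_⟩
    unfold jacS
    linear_combination (((-((c2 * Q2 * pderiv 0 Q1 - c1 * Q1 * pderiv 0 Q2) * 1 - (c2 * Q2 * pderiv 2 Q1 - c1 * Q1 * pderiv 2 Q2) * 0)) - X 2 * (-(pderiv 0 Q1 * pderiv 2 Q2 - pderiv 2 Q1 * pderiv 0 Q2)))) * hEP + ((c2 * Q2 * (-(0 * pderiv 2 Pp - 1 * pderiv 0 Pp)) - X 2 * (-(pderiv 0 Q2 * pderiv 2 Pp - pderiv 2 Q2 * pderiv 0 Pp)))) * hE1 + ((-(c1 * Q1) * (-(0 * pderiv 2 Pp - 1 * pderiv 0 Pp)) - X 2 * (-(pderiv 0 Pp * pderiv 2 Q1 - pderiv 2 Pp * pderiv 0 Q1)))) * hE2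
  · rw [delPQ_X0 Pp Q1, delPQ_X0 Pp Q2]
    refine ⟨pc * (((c2 * Q2 * pderiv 0 Q1 - c1 * Q1 * pderiv 0 Q2) * 0 - (c2 * Q2 * pderiv 1 Q1 - c1 * Q1 * pderiv 1 Q2) * 1) - X 0 * (pderiv 0 Q1 * pderiv 1 Q2 - pderiv 1 Q1 * pderiv 0 Q2)), ?_⟩
    unfold jacS
    linear_combination ((((c2 * Q2 * pderiv 0 Q1 - c1 * Q1 * pderiv 0 Q2) * 0 - (c2 * Q2 * pderiv 1 Q1 - c1 * Q1 * pderiv 1 Q2) * 1) - X 0 * (pderiv 0 Q1 * pderiv 1 Q2 - pderiv 1 Q1 * pderiv 0 Q2))) * hEP + ((c2 * Q2 * (1 * pderiv 1 Pp - 0 * pderiv 0 Pp) - X 0 * (pderiv 0 Q2 * pderiv 1 Pp - pderiv 1 Q2 * pderiv 0 Pp))) * hE1 + ((-(c1 * Q1) * (1 * pderiv 1 Pp - 0 * pderiv 0 Pp) - X 0 * (pderiv 0 Pp * pderiv 1 Q1 - pderiv 1 Pp * pderiv 0 Q1))) * hE2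
  · rw [delPQ_X1 Pp Q1, delPQ_X1 Pp Q2]
    refine ⟨pc * (((c2 * Q2 * pderiv 0 Q1 - c1 * Q1 * pderiv 0 Q2) * 1 - (c2 * Q2 * pderiv 1 Q1 - c1 * Q1 * pderiv 1 Q2) * 0) - X 1 * (pderiv 0 Q1 * pderiv 1 Q2 - pderiv 1 Q1 * pderiv 0 Q2)), ?_⟩
    unfold jacS
    linear_combination ((((c2 * Q2 * pderiv 0 Q1 - c1 * Q1 * pderiv 0 Q2) * 1 - (c2 * Q2 * pderiv 1 Q1 - c1 * Q1 * pderiv 1 Q2) * 0) - X 1 * (pderiv 0 Q1 * pderiv 1 Q2 - pderiv 1 Q1 * pderiv 0 Q2))) * hEP + ((c2 * Q2 * (0 * pderiv 1 Pp - 1 * pderiv 0 Pp) - X 1 * (pderiv 0 Q2 * pderiv 1 Pp - pderiv 1 Q2 * pderiv 0 Pp))) * hE1 + ((-(c1 * Q1) * (0 * pderiv 1 Pp - 1 * pderiv 0 Pp) - X 1 * (pderiv 0 Pp * pderiv 1 Q1 - pderiv 1 Pp * pderiv 0 Q1))) * hE2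
  · rw [delPQ_X2 Pp Q1, delPQ_X2 Pp Q2]
    refine ⟨pc * (((c2 * Q2 * pderiv 0 Q1 - c1 * Q1 * pderiv 0 Q2) * 0 - (c2 * Q2 * pderiv 1 Q1 - c1 * Q1 * pderiv 1 Q2) * 0) - X 2 * (pderiv 0 Q1 * pderiv 1 Q2 - pderiv 1 Q1 * pderiv 0 Q2)), ?_⟩
    unfold jacS
    linear_combination ((((c2 * Q2 * pderiv 0 Q1 - c1 * Q1 * pderiv 0 Q2) * 0 - (c2 * Q2 * pderiv 1 Q1 - c1 * Q1 * pderiv 1 Q2) * 0) - X 2 * (pderiv 0 Q1 * pderiv 1 Q2 - pderiv 1 Q1 * pderiv 0 Q2))) * hEP + ((c2 * Q2 * (0 * pderiv 1 Pp - 0 * pderiv 0 Pp) - X 2 * (pderiv 0 Q2 * pderiv 1 Pp - pderiv 1 Q2 * pderiv 0 Pp))) * hE1 + ((-(c1 * Q1) * (0 * pderiv 1 Pp - 0 * pderiv 0 Pp) - X 2 * (pderiv 0 Pp * pderiv 1 Q1 - pderiv 1 Pp * pderiv 0 Q1))) * hE2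

/-! ### Degree bookkeeping -/

/-- `f` is homogeneous of `ℤ`-degree `m` (where `f = 0` is allowed for any, including negative,
degree). -/
def ZH (m : ℤ) (f : MvPolynomial (Fin 3) k) : Prop :=
  f = 0 ∨ (0 ≤ m ∧ f.IsHomogeneous m.toNat)

lemma ZH_delPQ {P Q : MvPolynomial (Fin 3) k} {p q : ℕ} (hp : 1 ≤ p) (hq : 1 ≤ q)
    (hP : P.IsHomogeneous p) (hQ : Q.IsHomogeneous q) {m : ℤ} {f : MvPolynomial (Fin 3) k}
    (h : ZH m f) : ZH (m + (p + q) - 3) (delPQ P Q f) := by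
  rcases h with rfl | ⟨hm, hf⟩
  · left; simp
  · have hP' : P.IsHomogeneous ((p - 1) + 1) := by rwa [Nat.sub_add_cancel hp]
    have hQ' : Q.IsHomogeneous ((q - 1) + 1) := by rwa [Nat.sub_add_cancel hq]
    have hDX0 : (delPQ P Q (X 0)).IsHomogeneous ((p-1) + (q-1)) := by
      rw [delPQ_X0]
      exact ((pderiv_isHomogeneous 1 hP').mul (pderiv_isHomogeneous 2 hQ')).sub
        ((pderiv_isHomogeneous 2 hP').mul (pderiv_isHomogeneous 1 hQ'))
    have hDX1 : (delPQ P Q (X 1)).IsHomogeneous ((p-1) + (q-1)) := by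
      rw [delPQ_X1]
      exact (((pderiv_isHomogeneous 0 hP').mul (pderiv_isHomogeneous 2 hQ')).sub
        ((pderiv_isHomogeneous 2 hP').mul (pderiv_isHomogeneous 0 hQ'))).neg
    have hDX2 : (delPQ P Q (X 2)).IsHomogeneous ((p-1) + (q-1)) := by
      rw [delPQ_X2]
      exact ((pderiv_isHomogeneous 0 hP').mul (pderiv_isHomogeneous 1 hQ')).sub
        ((pderiv_isHomogeneous 1 hP').mul (pderiv_isHomogeneous 0 hQ'))
    by_cases hm0 : m.toNat = 0
    · left
      have hf0 : f.IsHomogeneous 0 := by rwa [hm0] at hf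
      rw [derivation_apply, Fin.sum_univ_three,
        pderiv_of_isHomogeneous_zero 0 hf0, pderiv_of_isHomogeneous_zero 1 hf0,
        pderiv_of_isHomogeneous_zero 2 hf0]
      ring
    · right
      refine ⟨by omega, ?_⟩
      have h1 : m.toNat = (m.toNat - 1) + 1 := by omega
      have hfd : ∀ t, (pderiv t f).IsHomogeneous (m.toNat - 1) :=
        fun t => pderiv_isHomogeneous t (h1 ▸ hf)
      have h2 : (m + (↑p + ↑q) - 3).toNat = (m.toNat - 1) + ((p-1) + (q-1)) := by omega
      rw [h2, derivation_apply, Fin.sum_univ_three]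
      exact (((hfd 0).mul hDX0).add ((hfd 1).mul hDX1)).add ((hfd 2).mul hDX2)

lemma ZH_iter {P Q : MvPolynomial (Fin 3) k} {p q : ℕ} (hp : 1 ≤ p) (hq : 1 ≤ q)
    (hP : P.IsHomogeneous p) (hQ : Q.IsHomogeneous q) (e : ℕ) {n : ℕ}
    (v : Fin n → MvPolynomial (Fin 3) k) (hv : ∀ j, (v j).IsHomogeneous e) :
    ∀ (l : ℕ) (j : Fin n), ZH ((e : ℤ) + l * ((p : ℤ) + q - 3)) ((⇑(delPQ P Q))^[l] (v j)) := by
  intro l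
  induction l with
  | zero =>
    intro j
    right
    refine ⟨by simp, ?_⟩
    simpa using hv j
  | succ l ih =>
    intro j
    rw [Function.iterate_succ_apply']
    have heq : (e : ℤ) + (l+1 : ℕ) * ((p : ℤ) + q - 3)
        = ((e : ℤ) + l * ((p : ℤ) + q - 3)) + ((p : ℤ) + q) - 3 := by
      push_cast; ring
    rw [heq]
    exact ZH_delPQ hp hq hP hQ (ih j)

/-! ### The Euler derivation -/

def eulerD : Derivation k (MvPolynomial (Fin 3) k) (MvPolynomial (Fin 3) k) :=
  MvPolynomial.mkDerivation k fun t => (X t : MvPolynomial (Fin 3) k)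

lemma eulerD_X (t : Fin 3) : (eulerD (k := k)) (X t) = X t := mkDerivation_X _ _ _

lemma eulerD_apply {f : MvPolynomial (Fin 3) k} {m : ℕ} (hf : f.IsHomogeneous m) :
    eulerD f = (m : k) • f := by
  have h1 := euler hf
  rw [Fin.sum_univ_three] at h1
  rw [derivation_apply, Fin.sum_univ_three, eulerD_X, eulerD_X, eulerD_X,
    smul_eq_C_mul, C_eq_coe_nat]
  linear_combination h1

lemma eulerD_iter_smul {P Q : MvPolynomial (Fin 3) k} {p q : ℕ} (hp : 1 ≤ p) (hq : 1 ≤ q)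
    (hP : P.IsHomogeneous p) (hQ : Q.IsHomogeneous q) (e : ℕ) {n : ℕ}
    (v : Fin n → MvPolynomial (Fin 3) k) (hv : ∀ j, (v j).IsHomogeneous e)
    (l : ℕ) (j : Fin n) :
    eulerD ((⇑(delPQ P Q))^[l] (v j))
      = (((((e : ℤ) + l * ((p : ℤ) + q - 3)).toNat : ℕ) : k)) • (⇑(delPQ P Q))^[l] (v j) := by
  rcases ZH_iter hp hq hP hQ e v hv l j with h0 | ⟨_, hh⟩
  · rw [h0]; simp
  · exact eulerD_apply hh

end DvdWronskianAux

open DvdWronskianAux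

theorem dvd_wronskian_delPQ_sub {k : Type*} [Field k] [CharZero k] [Infinite k]
    (P : MvPolynomial (Fin 3) k) (p : ℕ) (hPne : P ≠ 0) (hPhom : P.IsHomogeneous p)
    (Q1 Q2 : MvPolynomial (Fin 3) k) (q1 q2 : ℕ) (hq1 : 0 < q1) (hq2 : 0 < q2)
    (hQ1ne : Q1 ≠ 0) (hQ2ne : Q2 ≠ 0)
    (hQ1hom : Q1.IsHomogeneous q1) (hQ2hom : Q2.IsHomogeneous q2)
    {r : ℕ} (v : Fin (r + 1) → MvPolynomial (Fin 3) k) (e : ℕ)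
    (hv : ∀ j, (v j).IsHomogeneous e) :
    P ∣ (q2 : MvPolynomial (Fin 3) k) ^ Nat.choose (r + 1) 2 * Q2 ^ Nat.choose (r + 1) 2 *
          wronskian (delPQ P Q1) v
        - (q1 : MvPolynomial (Fin 3) k) ^ Nat.choose (r + 1) 2 * Q1 ^ Nat.choose (r + 1) 2 *
          wronskian (delPQ P Q2) v := by
  classical
  by_cases hp0 : p = 0
  · -- `P` is a nonzero constant, hence a unit
    subst hp0
    have hC : P = C (coeff 0 P) := by
      ext d
      rcases eq_or_ne d 0 with rfl | hd
      · simp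
      · rw [coeff_C, if_neg (Ne.symm hd)]
        refine hPhom.coeff_eq_zero ?_
        intro hcon
        exact hd (Finsupp.degree_eq_zero_iff d |>.mp hcon)
    have hu : IsUnit P := by
      rw [hC]
      refine IsUnit.map C (isUnit_iff_ne_zero.mpr ?_)
      intro h0
      exact hPne (by rw [hC, h0, map_zero])
    exact hu.dvd
  · have hp : 1 ≤ p := by omega
    set N := Nat.choose (r + 1) 2 with hN
    set D1 := delPQ P Q1 with hD1
    set D2 := delPQ P Q2 with hD2
    set W1 := wronskian D1 v with hW1
    set W2 := wronskian D2 v with hW2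
    set T : MvPolynomial (Fin 3) k := (q2 : MvPolynomial (Fin 3) k) ^ N * Q2 ^ N * W1 - (q1 : MvPolynomial (Fin 3) k) ^ N * Q1 ^ N * W2 with hT
    -- Euler identities
    have hEP : X 0 * pderiv 0 P + X 1 * pderiv 1 P + X 2 * pderiv 2 P = (p : MvPolynomial (Fin 3) k) * P := by
      have := euler hPhom; rwa [Fin.sum_univ_three] at this
    have hE1 : X 0 * pderiv 0 Q1 + X 1 * pderiv 1 Q1 + X 2 * pderiv 2 Q1 = (q1 : MvPolynomial (Fin 3) k) * Q1 := by
      have := euler hQ1hom; rwa [Fin.sum_univ_three] at this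
    have hE2 : X 0 * pderiv 0 Q2 + X 1 * pderiv 1 Q2 + X 2 * pderiv 2 Q2 = (q2 : MvPolynomial (Fin 3) k) * Q2 := by
      have := euler hQ2hom; rwa [Fin.sum_univ_three] at this
    have key : ∀ i : Fin 3, P ∣ X i ^ N * T := by
      intro i
      set μ1 : ℕ → k := fun l => ((((e : ℤ) + l * ((p : ℤ) + q1 - 3)).toNat : ℕ) : k) with hμ1
      set μ2 : ℕ → k := fun l => ((((e : ℤ) + l * ((p : ℤ) + q2 - 3)).toNat : ℕ) : k) with hμ2
      set A : Derivation k (MvPolynomial (Fin 3) k) (MvPolynomial (Fin 3) k) := (X i * ((q2 : MvPolynomial (Fin 3) k) * Q2)) • D1 + (0 : MvPolynomial (Fin 3) k) • eulerD with hA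
      set B : Derivation k (MvPolynomial (Fin 3) k) (MvPolynomial (Fin 3) k) :=
        (X i * ((q1 : MvPolynomial (Fin 3) k) * Q1)) • D2 + (X i * jacS P Q1 Q2) • eulerD with hB
      have hWA : wronskian A v = (X i * ((q2 : MvPolynomial (Fin 3) k) * Q2)) ^ N * W1 := by
        rw [hA, hW1, hN]
        exact wronskian_smul_add D1 eulerD (X i * ((q2 : MvPolynomial (Fin 3) k) * Q2)) 0 μ1 v
          (fun l j => eulerD_iter_smul hp hq1 hPhom hQ1hom e v hv l j)
      have hWB : wronskian B v = (X i * ((q1 : MvPolynomial (Fin 3) k) * Q1)) ^ N * W2 := by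
        rw [hB, hW2, hN]
        exact wronskian_smul_add D2 eulerD (X i * ((q1 : MvPolynomial (Fin 3) k) * Q1))
          (X i * jacS P Q1 Q2) μ2 v
          (fun l j => eulerD_iter_smul hp hq2 hPhom hQ2hom e v hv l j)
      have hPA : P ∣ A P := by
        have : A P = 0 := by
          rw [hA]
          simp only [Derivation.add_apply, Derivation.smul_apply, smul_eq_mul]
          rw [hD1, delPQ_self]
          ring
        rw [this]
        exact dvd_zero P
      have hgen : ∀ t : Fin 3, P ∣ A (X t) - B (X t) := by
        intro t
        have hkey := key_identity P Q1 Q2 (p : MvPolynomial (Fin 3) k) (q1 : MvPolynomial (Fin 3) k) (q2 : MvPolynomial (Fin 3) k) hEP hE1 hE2 i t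
        have heq : A (X t) - B (X t)
            = X i * ((q2 : MvPolynomial (Fin 3) k) * Q2) * delPQ P Q1 (X t)
              - X i * ((q1 : MvPolynomial (Fin 3) k) * Q1) * delPQ P Q2 (X t)
              - (X i * jacS P Q1 Q2) * X t := by
          rw [hA, hB]
          simp only [Derivation.add_apply, Derivation.smul_apply, smul_eq_mul, eulerD_X]
          rw [hD1, hD2]
          ring
        rwa [← heq] at hkey
      have hAB : P ∣ wronskian A v - wronskian B v := wronskian_sub_dvd P A B hPA hgen v
      have hfin : X i ^ N * T = wronskian A v - wronskian B v := by
        rw [hWA, hWB, hT]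
        ring
      rwa [← hfin] at hAB
    exact dvd_of_dvd_mul_X_pow N P T (key 0) (key 1)
end
end

section
/- Let k be an algebraically closed field of characteristic zero and S := k[X₀,X₁,X₂]. Let P ∈ S be a nonzero squarefree homogeneous polynomial and Q ∈ S a nonconstant homogeneous polynomial with gcd(P,Q) = 1. Then gcd(∂_{P,Q}, P) = 1; that is, P has no common nonunit factor with the three polynomials Xᵢ·G_j − X_j·Gᵢ (0 ≤ i < j ≤ 2), where G₀, G₁, G₂ are the coefficients of ∂_{P,Q} = G₀∂₀ + G₁∂₁ + G₂∂₂. -/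
open MvPolynomial

noncomputable section

/-- `gcd(∂, F) = 1` for a derivation with coefficient tuple `G`: every common factor of `F`
and the three minors `Xᵢ·G_j − X_j·Gᵢ` (`i < j`) is a unit. -/
def coeffsPrimeTo {R : Type*} [CommRing R] (G : Fin 3 → MvPolynomial (Fin 3) R)
    (F : MvPolynomial (Fin 3) R) : Prop :=
  ∀ z : MvPolynomial (Fin 3) R, z ∣ F →
    (∀ i j : Fin 3, i < j → z ∣ (X i * G j - X j * G i)) → IsUnit z

section AuxLemmas
open Finsupp
variable {k : Type*} [Field k]


lemma sum_univ_eq_degree (m : Fin 3 →₀ ℕ) : ∑ i : Fin 3, m i = m.degree := by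
  rw [Finsupp.degree]
  exact (Finset.sum_subset (Finset.subset_univ _)
    (fun i _ hi => Finsupp.notMem_support_iff.mp hi)).symm

lemma X_mul_pderiv_monomial (i : Fin 3) (m : Fin 3 →₀ ℕ) (a : k) :
    X i * pderiv i (monomial m a) = (m i) • monomial m a := by
  rw [pderiv_monomial]
  rcases Nat.eq_zero_or_pos (m i) with h | h
  · simp [h]
  · have hm : Finsupp.single i 1 + (m - Finsupp.single i 1) = m := by
      ext j
      simp only [Finsupp.add_apply, Finsupp.tsub_apply, Finsupp.single_apply]
      rcases eq_or_ne i j with rfl | hj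
      · rw [if_pos rfl]; omega
      · rw [if_neg hj]; omega
    rw [X, monomial_mul, smul_monomial, hm, one_mul, nsmul_eq_mul]
    exact congrArg _ (mul_comm _ _)

lemma euler {n : ℕ} {φ : MvPolynomial (Fin 3) k} (h : φ.IsHomogeneous n) :
    ∑ i : Fin 3, X i * pderiv i φ = (n : MvPolynomial (Fin 3) k) * φ := by
  calc ∑ i : Fin 3, X i * pderiv i φ
      = ∑ i : Fin 3, ∑ m ∈ φ.support, X i * pderiv i (monomial m (coeff m φ)) := by
        congr 1; ext i
        conv_lhs => rw [φ.as_sum]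
        rw [map_sum, Finset.mul_sum]
    _ = ∑ m ∈ φ.support, ∑ i : Fin 3, X i * pderiv i (monomial m (coeff m φ)) :=
        Finset.sum_comm
    _ = ∑ m ∈ φ.support, (n : MvPolynomial (Fin 3) k) * monomial m (coeff m φ) := by
        refine Finset.sum_congr rfl fun m hm => ?_
        have hdeg : m.degree = n := by
          have := h (MvPolynomial.mem_support_iff.mp hm)
          rwa [show (1 : Fin 3 → ℕ) = fun _ => 1 from rfl, ← degree_eq_weight_one] at this
        simp_rw [_root_.X_mul_pderiv_monomial]
        rw [← Finset.sum_smul, sum_univ_eq_degree, hdeg, nsmul_eq_mul]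
    _ = (n : MvPolynomial (Fin 3) k) * φ := by rw [← Finset.mul_sum, ← φ.as_sum]


def DL (m : Fin 3 →₀ ℕ) : Lex (Fin 4 →₀ ℕ) := toLex (Finsupp.cons m.degree m)

lemma degree_add' (a b : Fin 3 →₀ ℕ) : (a + b).degree = a.degree + b.degree := by
  simp only [degree_eq_weight_one, map_add]

lemma DL_add (a b : Fin 3 →₀ ℕ) : DL (a + b) = DL a + DL b := by
  show toLex _ = toLex (ofLex (DL a) + ofLex (DL b))
  congr 1
  ext j
  refine Fin.cases ?_ (fun j => ?_) j
  · simp [DL, Finsupp.cons_zero, degree_add']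
  · simp [DL, Finsupp.cons_succ]

lemma DL_inj : Function.Injective DL := by
  intro a b h
  have h' : Finsupp.cons a.degree a = Finsupp.cons b.degree b := congrArg ofLex h
  ext j
  have := DFunLike.congr_fun h' j.succ
  simpa [Finsupp.cons_succ] using this

lemma degree_le_of_DL_le {x y : Fin 3 →₀ ℕ} (h : DL x ≤ DL y) : x.degree ≤ y.degree := by
  by_contra hlt
  push_neg at hlt
  have hyx : DL y < DL x := by
    refine ⟨0, fun d hd => absurd hd (by simp), ?_⟩
    simpa [DL, Finsupp.cons_zero] using hlt
  exact absurd h (not_le.mpr hyx)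

lemma sum_id_eq_degree (s : Fin 3 →₀ ℕ) : (s.sum fun _ e => e) = s.degree := rfl

lemma exists_top (f : MvPolynomial (Fin 3) k) (hf : f ≠ 0) :
    ∃ m ∈ f.support, AddMonoidAlgebra.supDegree DL f = DL m ∧
      Finsupp.degree m = f.totalDegree := by
  obtain ⟨m, hm, he⟩ := AddMonoidAlgebra.exists_supDegree_mem_support DL hf
  refine ⟨m, hm, he, le_antisymm (le_totalDegree hm) ?_⟩
  rw [totalDegree]
  apply Finset.sup_le
  intro m' hm'
  rw [sum_id_eq_degree]
  apply degree_le_of_DL_le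
  rw [← he]
  exact Finset.le_sup hm'

lemma totalDegree_mul_eq {a b : MvPolynomial (Fin 3) k} (ha : a ≠ 0) (hb : b ≠ 0) :
    (a * b).totalDegree = a.totalDegree + b.totalDegree := by
  have hab : a * b ≠ 0 := mul_ne_zero ha hb
  obtain ⟨ma, hma, hsa, hda⟩ := exists_top a ha
  obtain ⟨mb, hmb, hsb, hdb⟩ := exists_top b hb
  obtain ⟨mc, hmc, hsc, hdc⟩ := exists_top (a * b) hab
  have hmul := AddMonoidAlgebra.supDegree_mul (D := DL) DL_inj DL_add
    (mul_ne_zero (fun h => ha ((AddMonoidAlgebra.leadingCoeff_eq_zero DL_inj).mp h))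
      (fun h => hb ((AddMonoidAlgebra.leadingCoeff_eq_zero DL_inj).mp h))) ha hb
  rw [hsc, hsa, hsb, ← DL_add] at hmul
  have := DL_inj hmul
  rw [← hdc, ← hda, ← hdb, this, degree_add']


lemma totalDegree_pderiv_lt (i : Fin 3) (f : MvPolynomial (Fin 3) k)
    (h : pderiv i f ≠ 0) : (pderiv i f).totalDegree < f.totalDegree := by
  have hsum : pderiv i f = ∑ m ∈ f.support,
      monomial (m - Finsupp.single i 1) (coeff m f * (m i : k)) := by
    conv_lhs => rw [f.as_sum]
    rw [map_sum]
    exact Finset.sum_congr rfl fun m _ => pderiv_monomial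
  have h0 : f.totalDegree ≠ 0 := by
    intro h0
    apply h
    have hz := (totalDegree_eq_zero_iff _ f).mp h0
    rw [hsum]
    apply Finset.sum_eq_zero
    intro m hm
    rw [hz m hm i]
    simp
  have hle : (pderiv i f).totalDegree ≤ f.totalDegree - 1 := by
    rw [hsum]
    apply totalDegree_finsetSum_le
    intro m hm
    rcases Nat.eq_zero_or_pos (m i) with h' | h'
    · simp [h']
    · refine (totalDegree_monomial_le _ _).trans ?_
      have hle' : Finsupp.single i 1 ≤ m := by
        rw [Finsupp.single_le_iff]; exact h'
      have hdeg : (m - Finsupp.single i 1).degree + (Finsupp.single i 1).degree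
          = m.degree := by
        rw [← degree_add', tsub_add_cancel_of_le hle']
      have hsingle : (Finsupp.single i (1:ℕ)).degree = 1 := by
        exact Finsupp.degree_single i 1
      have hmle : m.degree ≤ f.totalDegree := le_totalDegree hm
      have : ((m - Finsupp.single i 1).sum fun _ e => id e) =
          (m - Finsupp.single i 1).degree := rfl
      rw [this]
      omega
  omega

lemma coeff_pderiv (i : Fin 3) (f : MvPolynomial (Fin 3) k) (t : Fin 3 →₀ ℕ) :
    coeff t (pderiv i f) = ((t i : k) + 1) * coeff (t + Finsupp.single i 1) f := by
  induction f using MvPolynomial.induction_on' with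
  | add f g hf hg => rw [map_add, coeff_add, coeff_add, hf, hg]; ring
  | monomial m a =>
    rw [pderiv_monomial, coeff_monomial, coeff_monomial]
    by_cases h : t + Finsupp.single i 1 = m
    · subst h
      rw [if_pos (add_tsub_cancel_right _ _), if_pos rfl]
      have : ((t + Finsupp.single i 1) : Fin 3 →₀ ℕ) i = t i + 1 := by
        rw [Finsupp.add_apply, Finsupp.single_apply, if_pos rfl]
      rw [this]
      push_cast
      ring
    · have hR : (if m = t + Finsupp.single i 1 then a else (0:k)) = 0 :=
        if_neg (fun hh => h hh.symm)
      rw [hR, mul_zero]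
      by_cases h2 : m - Finsupp.single i 1 = t
      · rw [if_pos h2]
        have hmi : m i = 0 := by
          by_contra hmi
          apply h
          rw [← h2]
          ext j
          simp only [Finsupp.add_apply, Finsupp.tsub_apply, Finsupp.single_apply]
          rcases eq_or_ne i j with rfl | hj <;> simp_all <;> omega
        rw [hmi]
        simp
      · rw [if_neg h2]


lemma isUnit_of_pderiv_eq_zero [CharZero k] (r : MvPolynomial (Fin 3) k) (hr0 : r ≠ 0)
    (h : ∀ i, pderiv i r = 0) : IsUnit r := by
  have hsupp : ∀ m ∈ r.support, m = 0 := by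
    intro m hm
    by_contra hmne
    obtain ⟨i, hi⟩ : ∃ i, m i ≠ 0 := by
      by_contra hall; push_neg at hall
      exact hmne (Finsupp.ext hall)
    have hteq : (m - Finsupp.single i 1) + Finsupp.single i 1 = m :=
      tsub_add_cancel_of_le (by rw [Finsupp.single_le_iff]; omega)
    have hc := coeff_pderiv i r (m - Finsupp.single i 1)
    rw [h i, hteq, coeff_zero] at hc
    have hne : ((((m - Finsupp.single i 1) : Fin 3 →₀ ℕ) i : k) + 1) ≠ 0 := by
      exact Nat.cast_add_one_ne_zero _
    exact (MvPolynomial.mem_support_iff.mp hm) (by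
      rcases mul_eq_zero.mp hc.symm with h' | h'
      · exact absurd h' hne
      · exact h')
  have hC : r = C (coeff 0 r) := by
    ext m
    rcases eq_or_ne m 0 with rfl | hm
    · simp
    · rw [coeff_C, if_neg (Ne.symm hm)]
      by_contra hc
      exact hm (hsupp m (MvPolynomial.mem_support_iff.mpr hc))
  have hc0 : coeff 0 r ≠ 0 := fun h0 => hr0 (by rw [hC, h0, map_zero])
  rw [hC]
  exact (isUnit_iff_ne_zero.mpr hc0).map C

end AuxLemmas

/-- Let `k` be an algebraically closed field of characteristic zero and
`S := k[X₀,X₁,X₂]`.  Let `P ∈ S` be a nonzero squarefree homogeneous polynomial and `Q ∈ S` a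
nonconstant homogeneous polynomial with `gcd(P,Q) = 1`.  Then `gcd(∂_{P,Q}, P) = 1`: `P` has no
common nonunit factor with the three polynomials `Xᵢ·G_j − X_j·Gᵢ`, where `G₀,G₁,G₂` are the
coefficients of `∂_{P,Q}`. -/
theorem delPQ_primeTo_of_squarefree {k : Type*} [Field k] [IsAlgClosed k] [CharZero k]
    (P : MvPolynomial (Fin 3) k) (p : ℕ) (hPne : P ≠ 0) (hPhom : P.IsHomogeneous p)
    (hPsf : Squarefree P)
    (Q : MvPolynomial (Fin 3) k) (q : ℕ) (hq : 0 < q) (hQne : Q ≠ 0)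
    (hQhom : Q.IsHomogeneous q) (hPQ : IsRelPrime P Q) :
    coeffsPrimeTo (fun i => delPQ P Q (X i)) P := by
  intro z hzP hz
  by_contra hzu
  have hz0 : z ≠ 0 := fun h => hPne (by simpa [h] using (zero_dvd_iff.mp (h ▸ hzP)))
  obtain ⟨r, hri, hrz⟩ := WfDvdMonoid.exists_irreducible_factor hzu hz0
  have hrp : Prime r := UniqueFactorizationMonoid.irreducible_iff_prime.mp hri
  have hrP : r ∣ P := hrz.trans hzP
  -- the coefficients of the derivation
  have hG0 : delPQ P Q (X 0) = pderiv 1 P * pderiv 2 Q - pderiv 2 P * pderiv 1 Q := by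
    simp [delPQ, detDer, mkDerivation_X]
  have hG1 : delPQ P Q (X 1) = -(pderiv 0 P * pderiv 2 Q - pderiv 2 P * pderiv 0 Q) := by
    simp [delPQ, detDer, mkDerivation_X]
  have hG2 : delPQ P Q (X 2) = pderiv 0 P * pderiv 1 Q - pderiv 1 P * pderiv 0 Q := by
    simp [delPQ, detDer, mkDerivation_X]
  -- Euler identities
  have hEP : X 0 * pderiv 0 P + X 1 * pderiv 1 P + X 2 * pderiv 2 P
      = (p : MvPolynomial (Fin 3) k) * P := by
    have := euler hPhom; rwa [Fin.sum_univ_three] at this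
  have hEQ : X 0 * pderiv 0 Q + X 1 * pderiv 1 Q + X 2 * pderiv 2 Q
      = (q : MvPolynomial (Fin 3) k) * Q := by
    have := euler hQhom; rwa [Fin.sum_univ_three] at this
  -- the three minors
  have key0 : X 1 * delPQ P Q (X 2) - X 2 * delPQ P Q (X 1)
      = (q : MvPolynomial (Fin 3) k) * Q * pderiv 0 P
        - (p : MvPolynomial (Fin 3) k) * P * pderiv 0 Q := by
    rw [hG1, hG2]
    linear_combination (pderiv 0 P) * hEQ - (pderiv 0 Q) * hEP
  have key1 : X 0 * delPQ P Q (X 2) - X 2 * delPQ P Q (X 0)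
      = (p : MvPolynomial (Fin 3) k) * P * pderiv 1 Q
        - (q : MvPolynomial (Fin 3) k) * Q * pderiv 1 P := by
    rw [hG0, hG2]
    linear_combination (pderiv 1 Q) * hEP - (pderiv 1 P) * hEQ
  have key2 : X 0 * delPQ P Q (X 1) - X 1 * delPQ P Q (X 0)
      = (q : MvPolynomial (Fin 3) k) * Q * pderiv 2 P
        - (p : MvPolynomial (Fin 3) k) * P * pderiv 2 Q := by
    rw [hG0, hG1]
    linear_combination (pderiv 2 P) * hEQ - (pderiv 2 Q) * hEP
  have hdvd : ∀ i : Fin 3, r ∣ (q : MvPolynomial (Fin 3) k) * Q * pderiv i P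
      - (p : MvPolynomial (Fin 3) k) * P * pderiv i Q := by
    intro i
    fin_cases i
    · exact key0 ▸ hrz.trans (hz 1 2 (by decide))
    · have h1 : r ∣ X 0 * delPQ P Q (X 2) - X 2 * delPQ P Q (X 0) :=
        hrz.trans (hz 0 2 (by decide))
      rw [key1] at h1
      simpa using (dvd_neg.mpr h1)
    · exact key2 ▸ hrz.trans (hz 0 1 (by decide))
  -- r divides q•Q•∂ᵢP, hence ∂ᵢP
  have hqk : ((q : k)) ≠ 0 := Nat.cast_ne_zero.mpr hq.ne'
  have hrQ : ¬ r ∣ Q := fun hd => hrp.not_unit (hPQ hrP hd)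
  have hdP : ∀ i : Fin 3, r ∣ pderiv i P := by
    intro i
    have h2 : r ∣ (p : MvPolynomial (Fin 3) k) * P * pderiv i Q :=
      ((hrP.mul_left (p : MvPolynomial (Fin 3) k)).mul_right (pderiv i Q))
    have h3 : r ∣ (q : MvPolynomial (Fin 3) k) * Q * pderiv i P := by
      have := dvd_add (hdvd i) h2
      rwa [sub_add_cancel] at this
    have h4 : r ∣ Q * pderiv i P := by
      have hu : IsUnit ((q : MvPolynomial (Fin 3) k)) := by
        rw [(map_natCast (C : k →+* MvPolynomial (Fin 3) k) q).symm]
        exact (isUnit_iff_ne_zero.mpr hqk).map C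
      rw [mul_assoc] at h3
      exact (IsUnit.dvd_mul_left hu).mp h3
    rcases hrp.2.2 _ _ h4 with h | h
    · exact absurd h hrQ
    · exact h
  -- Leibniz + squarefree
  obtain ⟨T, hT⟩ := hrP
  have hrT : ¬ r ∣ T := by
    rintro ⟨c, rfl⟩
    exact hrp.not_unit (hPsf r ⟨c, by rw [hT]; ring⟩)
  have hpd : ∀ i : Fin 3, r ∣ pderiv i r := by
    intro i
    have h1 : r ∣ pderiv i r * T + r * pderiv i T := by
      have := hdP i
      rwa [hT, pderiv_mul] at this
    have h2 : r ∣ pderiv i r * T := by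
      have h3 : r ∣ r * pderiv i T := dvd_mul_right _ _
      have := dvd_sub h1 h3
      rwa [add_sub_cancel_right] at this
    rcases hrp.2.2 _ _ h2 with h | h
    · exact h
    · exact absurd h hrT
  have hpz : ∀ i : Fin 3, pderiv i r = 0 := by
    intro i
    by_contra hne
    have hlt := totalDegree_pderiv_lt i r hne
    obtain ⟨c, hc⟩ := hpd i
    have hcne : c ≠ 0 := by rintro rfl; rw [mul_zero] at hc; exact hne hc
    have hle : r.totalDegree ≤ (pderiv i r).totalDegree := by
      rw [hc, totalDegree_mul_eq hrp.ne_zero hcne]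
      exact Nat.le_add_right _ _
    omega
  exact hrp.not_unit (isUnit_of_pderiv_eq_zero r hrp.ne_zero hpz)
end
end

section
/- Let k be a field of characteristic zero and S := k[X₀,X₁,X₂]. Let F(t) = F₀ + t·H(t) ∈ S[[t]] be homogeneous of positive degree with F₀ ≠ 0, let F₀ = ∏ⱼ Eⱼ^{eⱼ} be its factorization into distinct irreducibles, set Dⱼ := ∂ⱼ(F₀)/∏ᵢ Eᵢ^{eᵢ−1}, and let ∂(0) := det[(D₀,D₁,D₂); ∇H(0); ∇]. Then for each index i there exists a k-derivation ∂ᵢ of S such that ∂(0) = eᵢ·(∏_{j≠i} Eⱼ)·∂_{Eᵢ,H(0)} + Eᵢ·∂ᵢ. -/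
open MvPolynomial

noncomputable section

/-- Product rule for derivations over a finite set. -/
lemma der_prod {ι R A : Type*} [CommRing A] [CommRing R] [Algebra R A] [DecidableEq ι]
    (δ : Derivation R A A) (s : Finset ι) (f : ι → A) :
    δ (∏ l ∈ s, f l) = ∑ l ∈ s, (∏ r ∈ s.erase l, f r) * δ (f l) := by
  induction s using Finset.induction with
  | empty => simp
  | insert a s ha ih =>
    rw [Finset.prod_insert ha, Derivation.leibniz, smul_eq_mul, smul_eq_mul, ih,
      Finset.sum_insert ha, Finset.erase_insert ha, Finset.mul_sum]
    rw [add_comm]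
    congr 1
    apply Finset.sum_congr rfl
    intro l hl
    rw [Finset.erase_insert_of_ne (by rintro rfl; exact ha hl),
      Finset.prod_insert (fun h => ha (Finset.erase_subset _ _ h))]
    ring

/-- Let `k` be a field of characteristic zero and `S := k[X₀,X₁,X₂]`.  Let
`F(t) = F₀ + t·H(t) ∈ S[[t]]` be homogeneous of positive degree with `F₀ ≠ 0`, factorization
`F₀ = ∏ⱼ Eⱼ^{eⱼ}` into distinct irreducibles, `Dⱼ := ∂ⱼ(F₀)/∏ᵢ Eᵢ^{eᵢ−1}`, and
`∂(0) := det[(D₀,D₁,D₂); ∇H(0); ∇]`.  Then for each index `i` there is a `k`-derivation `∂ᵢ`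
of `S` with `∂(0) = eᵢ·(∏_{j≠i} Eⱼ)·∂_{Eᵢ,H(0)} + Eᵢ·∂ᵢ`. -/
theorem reduced_derivation_decomposition {k : Type*} [Field k] [CharZero k]
    (F₀ : MvPolynomial (Fin 3) k) (H : PowerSeries (MvPolynomial (Fin 3) k))
    (d : ℕ) (hd : 0 < d)
    (hFhom : ∀ n, (PowerSeries.coeff n
      (PowerSeries.C F₀ + PowerSeries.X * H)).IsHomogeneous d)
    (hF₀ : F₀ ≠ 0)
    (m : ℕ) (E : Fin m → MvPolynomial (Fin 3) k) (e : Fin m → ℕ)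
    (hirr : ∀ i, Irreducible (E i)) (hpos : ∀ i, 0 < e i)
    (hdist : ∀ i j, i ≠ j → ¬ Associated (E i) (E j))
    (hfact : F₀ = ∏ i, E i ^ e i)
    (D : Fin 3 → MvPolynomial (Fin 3) k)
    (hD : ∀ j : Fin 3, pderiv j F₀ = (∏ i, E i ^ (e i - 1)) * D j) :
    ∀ i : Fin m, ∃ Di : Derivation k (MvPolynomial (Fin 3) k) (MvPolynomial (Fin 3) k),
      detDer D (fun l => pderiv l (PowerSeries.coeff 0 H))
        = ((e i : MvPolynomial (Fin 3) k) * ∏ j ∈ Finset.univ.erase i, E j) •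
            delPQ (E i) (PowerSeries.coeff 0 H) + E i • Di := by
  intro i
  have hEne : ∀ l, E l ≠ 0 := fun l => (hirr l).ne_zero
  have hP : (∏ l, E l ^ (e l - 1)) ≠ 0 :=
    Finset.prod_ne_zero_iff.2 fun l _ => pow_ne_zero _ (hEne l)
  -- full formula for D j
  have hDfull : ∀ j : Fin 3,
      D j = ∑ l, (e l : MvPolynomial (Fin 3) k) * (∏ r ∈ Finset.univ.erase l, E r) * pderiv j (E l) := by
    intro j
    apply mul_left_cancel₀ hP
    rw [← hD j, hfact, der_prod, Finset.mul_sum]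
    apply Finset.sum_congr rfl
    intro l _
    rw [pderiv_pow]
    have h1 : (∏ r ∈ Finset.univ.erase l, E r ^ e r)
        = (∏ r ∈ Finset.univ.erase l, E r ^ (e r - 1)) * ∏ r ∈ Finset.univ.erase l, E r := by
      rw [← Finset.prod_mul_distrib]
      exact Finset.prod_congr rfl fun r _ => by
        rw [← pow_succ, Nat.sub_add_cancel (hpos r)]
    have h2 : (∏ r, E r ^ (e r - 1))
        = E l ^ (e l - 1) * ∏ r ∈ Finset.univ.erase l, E r ^ (e r - 1) :=
      (Finset.mul_prod_erase _ _ (Finset.mem_univ l)).symm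
    rw [h1, h2]
    ring
  set R : Fin 3 → MvPolynomial (Fin 3) k := fun j =>
    ∑ l ∈ (Finset.univ.erase i), (e l : MvPolynomial (Fin 3) k) *
      (∏ r ∈ (Finset.univ.erase i).erase l, E r) * pderiv j (E l) with hR
  have hDj : ∀ j : Fin 3, D j =
      ((e i : MvPolynomial (Fin 3) k) * ∏ r ∈ Finset.univ.erase i, E r) * pderiv j (E i) + E i * R j := by
    intro j
    rw [hDfull j, ← Finset.add_sum_erase _ _ (Finset.mem_univ i), hR, Finset.mul_sum]
    congr 1
    apply Finset.sum_congr rfl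
    intro l hl
    have hli : i ∈ Finset.univ.erase l :=
      Finset.mem_erase.2 ⟨(Finset.mem_erase.1 hl).1.symm, Finset.mem_univ i⟩
    rw [← Finset.mul_prod_erase _ _ hli, Finset.erase_right_comm]
    ring
  refine ⟨detDer R (fun l => pderiv l (PowerSeries.coeff 0 H)), ?_⟩
  apply MvPolynomial.derivation_ext
  intro j
  fin_cases j <;>
  · simp only [detDer, delPQ, Derivation.add_apply, Derivation.smul_apply, mkDerivation_X,
      smul_eq_mul, Fin.zero_eta, Fin.mk_one, Fin.reduceFinMk, Matrix.cons_val_zero,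
      Matrix.cons_val_one, Matrix.head_cons, Matrix.cons_val_two, Matrix.tail_cons]
    simp only [hDj]
    ring
end
end

section
/- Let k be a field of characteristic zero, S := k[X₀,X₁,X₂], and K := Frac(S). Let F(t) := E²A + Σ_{i≥1} Fᵢtⁱ ∈ S[[t]] be a homogeneous power series of positive degree, where E, A ∈ S are squarefree, homogeneous and coprime. Let E_j be an irreducible factor of E and set B_j := E²A/E_j² ∈ S. Define Δ_{1,j} := F₁ and, for n ≥ 0, Δ_{n+2,j} := B_j^{n+1}·F_{n+2} − Σ_{i+r=n+2, i,r≥1} (Δ_{i,j}/(2E_j))·(Δ_{r,j}/(2E_j)), elements of K. Then for every integer n ≥ 0, in K[[t]] one has B_j^{2n+1}·F(t) ≡ (E_j·B_j^{n+1} + Σ_{i=1}^{n+1} (Δ_{i,j}/(2E_j))·B_j^{n+1−i}·tⁱ)² + B_j^{n}·Δ_{n+2,j}·t^{n+2} modulo t^{n+3}. -/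
open MvPolynomial

noncomputable section

private lemma sum_Icc_one_eq_range {M : Type*} [AddCommMonoid M] (m : ℕ) (f : ℕ → M) :
    ∑ i ∈ Finset.Icc 1 m, f i = ∑ i ∈ Finset.range m, f (i + 1) := by
  rw [show Finset.Icc 1 m = Finset.Ico 1 (m + 1) by rfl, Finset.sum_Ico_eq_sum_range]
  simp [add_comm]

private lemma aux_congr {K : Type*} [Field K] (G : PowerSeries K) (e b : K)
    (Δ : ℕ → K) (he : 2 * e ≠ 0)
    (h0 : PowerSeries.coeff 0 G = e ^ 2 * b)
    (hΔ1 : Δ 1 = PowerSeries.coeff 1 G)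
    (hrec : ∀ n : ℕ, Δ (n + 2) = b ^ (n + 1) * PowerSeries.coeff (n + 2) G
      - ∑ i ∈ Finset.Icc 1 (n + 1), (Δ i / (2 * e)) * (Δ (n + 2 - i) / (2 * e))) :
    ∀ n : ℕ, (PowerSeries.X : PowerSeries K) ^ (n + 3) ∣
      (PowerSeries.C b ^ (2 * n + 1) * G
        - ((PowerSeries.C (e * b ^ (n + 1))
            + ∑ i ∈ Finset.Icc 1 (n + 1),
                PowerSeries.C ((Δ i / (2 * e)) * b ^ (n + 1 - i)) * PowerSeries.X ^ i) ^ 2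
          + PowerSeries.C (b ^ n * Δ (n + 2)) * PowerSeries.X ^ (n + 2))) := by
  intro n
  set δ : ℕ → K := fun m => Δ m / (2 * e) with hδ
  have key : ∀ m, δ m * (2 * e) = Δ m := fun m => div_mul_cancel₀ _ he
  set p : ℕ → K := fun j => if j = 0 then e * b ^ (n + 1)
    else if j ≤ n + 1 then δ j * b ^ (n + 1 - j) else 0 with hp
  set P : PowerSeries K := PowerSeries.C (e * b ^ (n + 1))
    + ∑ i ∈ Finset.Icc 1 (n + 1),
        PowerSeries.C (δ i * b ^ (n + 1 - i)) * PowerSeries.X ^ i with hPdef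
  have hP : ∀ j, PowerSeries.coeff j P = p j := by
    intro j
    simp only [hPdef, map_add, PowerSeries.coeff_C, map_sum, PowerSeries.coeff_C_mul,
      PowerSeries.coeff_X_pow, mul_ite, mul_one, mul_zero]
    rw [Finset.sum_ite_eq]
    simp only [Finset.mem_Icc, hp]
    rcases eq_or_ne j 0 with rfl | hj0
    · norm_num
    · rw [if_neg hj0, if_neg hj0, zero_add]
      by_cases hj : j ≤ n + 1
      · rw [if_pos ⟨by omega, hj⟩, if_pos hj]
      · rw [if_neg (by omega), if_neg hj]
  have hP2 : ∀ m, PowerSeries.coeff m (P ^ 2)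
      = ∑ i ∈ Finset.range (m + 1), p i * p (m - i) := by
    intro m
    rw [sq, PowerSeries.coeff_mul, Finset.Nat.sum_antidiagonal_eq_sum_range_succ_mk]
    simp [hP]
  have hsum : ∀ m, 1 ≤ m → m ≤ n + 1 →
      (∑ i ∈ Finset.range (m + 1), p i * p (m - i))
        = b ^ (2 * n + 2 - m) * ((2 * e) * δ m + ∑ i ∈ Finset.Icc 1 (m - 1), δ i * δ (m - i)) := by
    intro m h1 h2
    obtain ⟨m', rfl⟩ : ∃ m', m = m' + 1 := ⟨m - 1, by omega⟩
    obtain ⟨q, hq⟩ := Nat.exists_eq_add_of_le h2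
    rw [Finset.sum_range_succ, Finset.sum_range_succ']
    have hpm : p (m' + 1) = δ (m' + 1) * b ^ q := by
      simp only [hp]
      rw [if_neg (by omega), if_pos (by omega), show n + 1 - (m' + 1) = q by omega]
    have hp0 : p 0 = e * b ^ (n + 1) := by simp [hp]
    have hmid : ∀ i ∈ Finset.range m', p (i + 1) * p (m' + 1 - (i + 1))
        = b ^ (n + 1) * b ^ q * (δ (i + 1) * δ (m' + 1 - (i + 1))) := by
      intro i hi
      rw [Finset.mem_range] at hi
      have e1 : p (i + 1) = δ (i + 1) * b ^ (n + 1 - (i + 1)) := by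
        simp only [hp]; rw [if_neg (by omega), if_pos (by omega)]
      have e2 : p (m' + 1 - (i + 1)) = δ (m' + 1 - (i + 1)) * b ^ (n + 1 - (m' + 1 - (i + 1))) := by
        simp only [hp]; rw [if_neg (by omega), if_pos (by omega)]
      rw [e1, e2, mul_mul_mul_comm, ← pow_add,
        show n + 1 - (i + 1) + (n + 1 - (m' + 1 - (i + 1))) = (n + 1) + q by omega, pow_add]
      ring
    rw [Finset.sum_congr rfl hmid, ← Finset.mul_sum, Nat.sub_self,
      show m' + 1 - 0 = m' + 1 by omega, hp0, hpm,
      show m' + 1 - 1 = m' by omega, sum_Icc_one_eq_range,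
      show 2 * n + 2 - (m' + 1) = (n + 1) + q by omega, pow_add]
    ring
  have hsum2 : (∑ i ∈ Finset.range (n + 3), p i * p (n + 2 - i))
      = b ^ n * ∑ i ∈ Finset.Icc 1 (n + 1), δ i * δ (n + 2 - i) := by
    rw [show n + 3 = (n + 2) + 1 by omega, Finset.sum_range_succ, Finset.sum_range_succ']
    have h1 : p (n + 2) = 0 := by
      simp only [hp]; rw [if_neg (by omega), if_neg (by omega)]
    have hmid : ∀ i ∈ Finset.range (n + 1), p (i + 1) * p (n + 2 - (i + 1))
        = b ^ n * (δ (i + 1) * δ (n + 2 - (i + 1))) := by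
      intro i hi
      rw [Finset.mem_range] at hi
      have e1 : p (i + 1) = δ (i + 1) * b ^ (n + 1 - (i + 1)) := by
        simp only [hp]; rw [if_neg (by omega), if_pos (by omega)]
      have e2 : p (n + 2 - (i + 1)) = δ (n + 2 - (i + 1)) * b ^ (n + 1 - (n + 2 - (i + 1))) := by
        simp only [hp]; rw [if_neg (by omega), if_pos (by omega)]
      rw [e1, e2, mul_mul_mul_comm, ← pow_add,
        show n + 1 - (i + 1) + (n + 1 - (n + 2 - (i + 1))) = n by omega]
      ring
    rw [Finset.sum_congr rfl hmid, ← Finset.mul_sum, sum_Icc_one_eq_range]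
    simp [h1]
  rw [PowerSeries.X_pow_dvd_iff]
  intro m hm
  rw [map_sub, map_add, hP2, ← map_pow, PowerSeries.coeff_C_mul, PowerSeries.coeff_C_mul,
    PowerSeries.coeff_X_pow, sub_eq_zero]
  rcases Nat.lt_or_ge m 1 with h | h
  · interval_cases m
    · rw [if_neg (by omega), mul_zero, add_zero]
      rw [show (0:ℕ) + 1 = 1 from rfl, Finset.sum_range_one, Nat.sub_self]
      have hp0 : p 0 = e * b ^ (n + 1) := by simp [hp]
      rw [hp0, h0]
      ring
  · rcases Nat.lt_or_ge m (n + 2) with h2 | h2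
    · -- 1 ≤ m ≤ n + 1
      rw [if_neg (by omega), mul_zero, add_zero, hsum m h (by omega)]
      have hmain : (2 * e) * δ m + ∑ i ∈ Finset.Icc 1 (m - 1), δ i * δ (m - i)
          = b ^ (m - 1) * PowerSeries.coeff m G := by
        rcases Nat.lt_or_ge m 2 with hm2 | hm2
        · interval_cases m
          · rw [show (1:ℕ) - 1 = 0 by omega, Finset.Icc_eq_empty (by omega), Finset.sum_empty,
              add_zero, mul_comm, key 1, hΔ1, pow_zero, one_mul]
        · obtain ⟨m'', rfl⟩ : ∃ m'', m = m'' + 2 := ⟨m - 2, by omega⟩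
          rw [show (2 * e) * δ (m'' + 2) = Δ (m'' + 2) by rw [← key (m'' + 2)]; ring,
            hrec m'', show m'' + 2 - 1 = m'' + 1 by omega]
          ring
      rw [hmain, ← mul_assoc, ← pow_add, show 2 * n + 2 - m + (m - 1) = 2 * n + 1 by omega]
    · -- m = n + 2
      have hm' : m = n + 2 := by omega
      subst hm'
      rw [if_pos rfl, hsum2, mul_one, hrec n,
        show (∑ i ∈ Finset.Icc 1 (n + 1), δ i * δ (n + 2 - i))
          = ∑ i ∈ Finset.Icc 1 (n + 1), Δ i / (2 * e) * (Δ (n + 2 - i) / (2 * e)) from rfl,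
        show 2 * n + 1 = n + (n + 1) by omega, pow_add]
      ring


/-- Lemma 5.1.1: Let `k` be a field of characteristic zero,
`S := k[X₀,X₁,X₂]`, `K := Frac S`.  Let `F(t) = E²A + Σ_{i≥1} Fᵢtⁱ ∈ S[[t]]` be a homogeneous
power series of positive degree, `E, A` squarefree homogeneous and coprime, `E_j` an
irreducible factor of `E`, `B_j := E²A/E_j²`, and let `Δ_{i,j} ∈ K` be the discriminants,
defined by `Δ_{1,j} := F₁` and
`Δ_{n+2,j} := B_j^{n+1}F_{n+2} − Σ_{i+r=n+2, i,r≥1}(Δ_{i,j}/(2E_j))(Δ_{r,j}/(2E_j))`.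
Then for every `n ≥ 0`, in `K[[t]]`,
`B_j^{2n+1}F(t) ≡ (E_jB_j^{n+1} + Σ_{i=1}^{n+1}(Δ_{i,j}/(2E_j))B_j^{n+1−i}tⁱ)²
  + B_j^nΔ_{n+2,j}t^{n+2}  (mod t^{n+3})`. -/
theorem zeuthen_discriminant_congruence {k : Type*} [Field k] [CharZero k]
    (F : PowerSeries (MvPolynomial (Fin 3) k)) (d : ℕ) (hd : 0 < d)
    (hFhom : ∀ n, (PowerSeries.coeff n F).IsHomogeneous d)
    (E A : MvPolynomial (Fin 3) k) (dE dA : ℕ)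
    (hEhom : E.IsHomogeneous dE) (hAhom : A.IsHomogeneous dA)
    (hEsf : Squarefree E) (hAsf : Squarefree A) (hEA : IsRelPrime E A)
    (hF0 : PowerSeries.coeff 0 F = E ^ 2 * A)
    (Ej : MvPolynomial (Fin 3) k) (hEj : Irreducible Ej) (hEjE : Ej ∣ E)
    (B : MvPolynomial (Fin 3) k) (hB : Ej ^ 2 * B = E ^ 2 * A)
    (Δ : ℕ → FractionRing (MvPolynomial (Fin 3) k))
    (φ : MvPolynomial (Fin 3) k →+* FractionRing (MvPolynomial (Fin 3) k))
    (hφ : φ = algebraMap _ _)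
    (hΔ1 : Δ 1 = φ (PowerSeries.coeff 1 F))
    (hΔrec : ∀ n : ℕ, Δ (n + 2) =
      φ B ^ (n + 1) * φ (PowerSeries.coeff (n + 2) F)
        - ∑ i ∈ Finset.Icc 1 (n + 1),
            (Δ i / (2 * φ Ej)) * (Δ (n + 2 - i) / (2 * φ Ej))) :
    ∀ n : ℕ,
      (PowerSeries.X : PowerSeries (FractionRing (MvPolynomial (Fin 3) k))) ^ (n + 3) ∣
        (PowerSeries.C (φ B) ^ (2 * n + 1) * PowerSeries.map φ F
          - ((PowerSeries.C (φ Ej * φ B ^ (n + 1))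
              + ∑ i ∈ Finset.Icc 1 (n + 1),
                  PowerSeries.C ((Δ i / (2 * φ Ej)) * φ B ^ (n + 1 - i)) *
                    PowerSeries.X ^ i) ^ 2
            + PowerSeries.C (φ B ^ n * Δ (n + 2)) * PowerSeries.X ^ (n + 2))) := by
  have hinj : Function.Injective φ := by
    rw [hφ]; exact IsFractionRing.injective _ _
  have he : (2 : FractionRing (MvPolynomial (Fin 3) k)) * φ Ej ≠ 0 := by
    have h2 : (2 : FractionRing (MvPolynomial (Fin 3) k)) * φ Ej = φ (2 * Ej) := by
      rw [map_mul, map_ofNat]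
    rw [h2]
    exact (map_ne_zero_iff φ hinj).mpr (mul_ne_zero two_ne_zero hEj.ne_zero)
  have h0 : PowerSeries.coeff 0 (PowerSeries.map φ F) = (φ Ej) ^ 2 * φ B := by
    rw [PowerSeries.coeff_map, hF0, ← hB, map_mul, map_pow]
  have h1 : Δ 1 = PowerSeries.coeff 1 (PowerSeries.map φ F) := by
    rw [hΔ1, PowerSeries.coeff_map]
  have hrec : ∀ n : ℕ, Δ (n + 2) = φ B ^ (n + 1)
      * PowerSeries.coeff (n + 2) (PowerSeries.map φ F)
      - ∑ i ∈ Finset.Icc 1 (n + 1), (Δ i / (2 * φ Ej)) * (Δ (n + 2 - i) / (2 * φ Ej)) := by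
    intro n; rw [hΔrec n, PowerSeries.coeff_map]
  exact aux_congr (PowerSeries.map φ F) (φ Ej) (φ B) Δ he h0 h1 hrec
end
end

section
/- Let k be a field of characteristic zero and S := k[X₀,X₁,X₂]. Let F(t) := E²A + Σ_{i≥1} Fᵢtⁱ ∈ S[[t]] be a homogeneous power series of positive degree, where E, A ∈ S are squarefree, homogeneous and coprime; let E_j be an irreducible factor of E and B_j := E²A/E_j² ∈ S. Suppose there exist Δ'₁, Δ'₂, … ∈ S with E_j·Δ'₁ = F₁ and, for all n ≥ 0, E_j·Δ'_{n+2} = B_j^{n+1}·F_{n+2} − Σ_{i+r=n+2, i,r≥1} (Δ'ᵢ/2)·(Δ'_r/2) (i.e., F(t) fails to be of type n for E_j for every n, all discriminants Δ_{n,j} being divisible by E_j). Then in R[[t]], where R is the localization of S away from B_j, one has B_j·F(t) = (E_j·B_j + Σ_{i≥1} (Δ'ᵢ/2)·B_j^{1−i}·tⁱ)²; in particular B_j·F(t) is a square in R[[t]], so the generic curve F* = 0 is not reduced on the open set B_j ≠ 0. -/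
open MvPolynomial

noncomputable section

private lemma aux_square {S R : Type*} [CommRing S] [CommRing R] (φ : S →+* R)
    (F : PowerSeries S) (Ej B : S) (u : R) (huB : φ B * u = 1)
    (hF0 : PowerSeries.coeff 0 F = Ej ^ 2 * B)
    (δ Δ' : ℕ → S) (h2 : ∀ i, 2 * δ i = Δ' i)
    (hΔ'1 : Ej * Δ' 1 = PowerSeries.coeff 1 F)
    (hrec : ∀ n : ℕ, Ej * Δ' (n + 2) =
      B ^ (n + 1) * PowerSeries.coeff (n + 2) F
        - ∑ i ∈ Finset.Icc 1 (n + 1), δ i * δ (n + 2 - i)) :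
    PowerSeries.C (φ B) * PowerSeries.map φ F =
      (PowerSeries.mk fun i => if i = 0 then φ (Ej * B) else φ (δ i) * u ^ (i - 1)) ^ 2 := by
  set g : ℕ → R := fun i => if i = 0 then φ (Ej * B) else φ (δ i) * u ^ (i - 1) with hg
  have hBpow : ∀ r : ℕ, φ (B ^ (r + 1)) * u ^ r = φ B := by
    intro r
    rw [map_pow]
    calc φ B ^ (r + 1) * u ^ r = φ B * (φ B * u) ^ r := by ring
    _ = φ B := by rw [huB, one_pow, mul_one]
  have hBu : ∀ r : ℕ, φ B * u ^ (r + 1) = u ^ r := by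
    intro r
    calc φ B * u ^ (r + 1) = (φ B * u) * u ^ r := by ring
    _ = u ^ r := by rw [huB, one_mul]
  have g0 : g 0 = φ (Ej * B) := if_pos rfl
  have gs : ∀ i : ℕ, g (i + 1) = φ (δ (i + 1)) * u ^ i := by
    intro i
    simp only [hg, if_neg (Nat.succ_ne_zero i), Nat.add_sub_cancel]
  ext n
  rw [PowerSeries.coeff_C_mul, PowerSeries.coeff_map, sq, PowerSeries.coeff_mul]
  rw [Finset.Nat.sum_antidiagonal_eq_sum_range_succ
    (fun i j => PowerSeries.coeff i (PowerSeries.mk g) * PowerSeries.coeff j (PowerSeries.mk g)) n]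
  simp only [PowerSeries.coeff_mk]
  match n with
  | 0 =>
    rw [Finset.sum_range_one, Nat.sub_self, g0, hF0, ← map_mul, ← map_mul]
    congr 1
    ring
  | 1 =>
    rw [Finset.sum_range_succ, Finset.sum_range_one]
    simp only [Nat.sub_self, Nat.sub_zero]
    rw [g0, gs 0, pow_zero, mul_one]
    rw [← map_mul, ← map_mul, ← map_mul, ← map_add]
    congr 1
    rw [← hΔ'1, ← h2 1]
    ring
  | (m + 2) =>
    rw [Finset.sum_range_succ' (fun i => g i * g (m + 2 - i)) (m + 2)]
    rw [Finset.sum_range_succ (fun i => g (i + 1) * g (m + 2 - (i + 1))) (m + 1)]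
    have hmid : ∀ i ∈ Finset.range (m + 1),
        g (i + 1) * g (m + 2 - (i + 1)) = φ (δ (i + 1) * δ (m + 2 - (i + 1))) * u ^ m := by
      intro i hi
      have hi' : i ≤ m := Nat.lt_succ_iff.mp (Finset.mem_range.mp hi)
      have h1 : m + 2 - (i + 1) = (m - i) + 1 := by omega
      rw [gs i, h1, gs (m - i), map_mul]
      calc φ (δ (i + 1)) * u ^ i * (φ (δ (m - i + 1)) * u ^ (m - i))
          = φ (δ (i + 1)) * φ (δ (m - i + 1)) * (u ^ i * u ^ (m - i)) := by ring
      _ = φ (δ (i + 1)) * φ (δ (m - i + 1)) * u ^ m := by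
          rw [← pow_add, Nat.add_sub_cancel' hi']
    rw [Finset.sum_congr rfl hmid]
    have hIcc : Finset.Icc 1 (m + 1)
        = Finset.map ⟨fun i => i + 1, add_left_injective 1⟩ (Finset.range (m + 1)) := by
      ext x
      simp only [Finset.mem_Icc, Finset.mem_map, Finset.mem_range, Function.Embedding.coeFn_mk]
      constructor
      · intro h; exact ⟨x - 1, by omega, by omega⟩
      · rintro ⟨a, ha, rfl⟩; omega
    have hsum : ∑ i ∈ Finset.range (m + 1), φ (δ (i + 1) * δ (m + 2 - (i + 1))) * u ^ m
        = φ (∑ i ∈ Finset.Icc 1 (m + 1), δ i * δ (m + 2 - i)) * u ^ m := by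
      rw [map_sum, Finset.sum_mul, hIcc, Finset.sum_map]
      apply Finset.sum_congr rfl
      intro i hi
      simp
    rw [hsum]
    have hend : g (m + 1 + 1) * g (m + 2 - (m + 1 + 1)) + g 0 * g (m + 2 - 0)
        = φ (B * (Ej * Δ' (m + 2))) * u ^ (m + 1) := by
      have e1 : m + 2 - (m + 1 + 1) = 0 := by omega
      have e2 : m + 2 - 0 = m + 1 + 1 := rfl
      rw [e1, e2, g0, gs (m + 1)]
      have e3 : B * (Ej * Δ' (m + 2)) = (Ej * B) * (2 * δ (m + 2)) := by
        rw [h2]; ring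
      rw [e3]
      simp only [map_mul, map_ofNat]
      ring
    rw [add_assoc, hend, hrec m, mul_sub, map_sub, sub_mul]
    rw [show B * (B ^ (m + 1) * PowerSeries.coeff (m + 2) F)
        = B ^ (m + 2) * PowerSeries.coeff (m + 2) F by ring]
    rw [map_mul, map_mul]
    have e1 : φ (B ^ (m + 2)) * φ (PowerSeries.coeff (m + 2) F) * u ^ (m + 1)
        = φ B * φ (PowerSeries.coeff (m + 2) F) := by
      have hb := hBpow (m + 1)
      rw [show m + 1 + 1 = m + 2 from rfl] at hb
      calc φ (B ^ (m + 2)) * φ (PowerSeries.coeff (m + 2) F) * u ^ (m + 1)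
          = (φ (B ^ (m + 2)) * u ^ (m + 1)) * φ (PowerSeries.coeff (m + 2) F) := by ring
      _ = φ B * φ (PowerSeries.coeff (m + 2) F) := by rw [hb]
    have e2 : φ B * φ (∑ i ∈ Finset.Icc 1 (m + 1), δ i * δ (m + 2 - i)) * u ^ (m + 1)
        = φ (∑ i ∈ Finset.Icc 1 (m + 1), δ i * δ (m + 2 - i)) * u ^ m := by
      calc φ B * φ (∑ i ∈ Finset.Icc 1 (m + 1), δ i * δ (m + 2 - i)) * u ^ (m + 1)
          = (φ B * u ^ (m + 1)) * φ (∑ i ∈ Finset.Icc 1 (m + 1), δ i * δ (m + 2 - i)) := by ring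
      _ = u ^ m * φ (∑ i ∈ Finset.Icc 1 (m + 1), δ i * δ (m + 2 - i)) := by rw [hBu m]
      _ = φ (∑ i ∈ Finset.Icc 1 (m + 1), δ i * δ (m + 2 - i)) * u ^ m := by ring
    rw [e1, e2]
    ring

/-- Let `k` be a field of characteristic zero and `S := k[X₀,X₁,X₂]`.  Let
`F(t) = E²A + Σ_{i≥1} Fᵢtⁱ ∈ S[[t]]` be homogeneous of positive degree, with `E, A`
squarefree homogeneous and coprime, `E_j` an irreducible factor of `E` and `B_j := E²A/E_j²`.
Suppose there are `Δ'₁, Δ'₂, … ∈ S` with `E_j·Δ'₁ = F₁` and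
`E_j·Δ'_{n+2} = B_j^{n+1}F_{n+2} − Σ_{i+r=n+2, i,r≥1}(Δ'ᵢ/2)(Δ'_r/2)` (i.e. `F(t)` is not of
type `n` for `E_j` for any `n`: every discriminant is divisible by `E_j`).  Then, in
`R[[t]]` with `R := S[1/B_j]`, one has
`B_j·F(t) = (E_j·B_j + Σ_{i≥1}(Δ'ᵢ/2)·B_j^{1−i}·tⁱ)²`; in particular `B_j·F(t)` is a square
in `R[[t]]`, so the generic curve `F* = 0` is not reduced on the open set `B_j ≠ 0`. -/
theorem not_of_any_type_implies_square {k : Type*} [Field k] [CharZero k]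
    (F : PowerSeries (MvPolynomial (Fin 3) k)) (d : ℕ) (hd : 0 < d)
    (hFhom : ∀ n, (PowerSeries.coeff n F).IsHomogeneous d)
    (E A : MvPolynomial (Fin 3) k) (dE dA : ℕ)
    (hEhom : E.IsHomogeneous dE) (hAhom : A.IsHomogeneous dA)
    (hEsf : Squarefree E) (hAsf : Squarefree A) (hEA : IsRelPrime E A)
    (hF0 : PowerSeries.coeff 0 F = E ^ 2 * A)
    (Ej : MvPolynomial (Fin 3) k) (hEj : Irreducible Ej) (hEjE : Ej ∣ E)
    (B : MvPolynomial (Fin 3) k) (hB : Ej ^ 2 * B = E ^ 2 * A)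
    (Δ' : ℕ → MvPolynomial (Fin 3) k)
    (hΔ'1 : Ej * Δ' 1 = PowerSeries.coeff 1 F)
    (hΔ'rec : ∀ n : ℕ, Ej * Δ' (n + 2) =
      B ^ (n + 1) * PowerSeries.coeff (n + 2) F
        - ∑ i ∈ Finset.Icc 1 (n + 1),
            ((2 : k)⁻¹ • Δ' i) * ((2 : k)⁻¹ • Δ' (n + 2 - i))) :
    PowerSeries.C (R := Localization.Away B) (algebraMap _ _ B) *
        PowerSeries.map (algebraMap _ (Localization.Away B)) F =
      (PowerSeries.mk fun i =>
        if i = 0 then algebraMap _ (Localization.Away B) (Ej * B)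
        else algebraMap _ (Localization.Away B) ((2 : k)⁻¹ • Δ' i) *
          (IsLocalization.Away.invSelf (S := Localization.Away B) B) ^ (i - 1)) ^ 2 ∧
    IsSquare (PowerSeries.C (R := Localization.Away B) (algebraMap _ _ B) *
        PowerSeries.map (algebraMap _ (Localization.Away B)) F) := by
  have h2 : ∀ i, (2 : MvPolynomial (Fin 3) k) * ((2 : k)⁻¹ • Δ' i) = Δ' i := by
    intro i
    rw [show (2 : MvPolynomial (Fin 3) k) = MvPolynomial.C (2 : k) from
        (map_ofNat (MvPolynomial.C : k →+* MvPolynomial (Fin 3) k) 2).symm,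
      ← MvPolynomial.smul_eq_C_mul, smul_smul, mul_inv_cancel₀ (two_ne_zero), one_smul]
  have main := aux_square (algebraMap (MvPolynomial (Fin 3) k) (Localization.Away B)) F Ej B
    (IsLocalization.Away.invSelf (S := Localization.Away B) B)
    (IsLocalization.Away.mul_invSelf B) (by rw [hF0, ← hB])
    (fun i => (2 : k)⁻¹ • Δ' i) Δ' h2 hΔ'1 hΔ'rec
  refine ⟨main, ?_⟩
  rw [main]
  exact ⟨_, sq _⟩
end
end
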